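/- arXiv:2311.14023 — 3 statements merged into one kernel-verified Lean document; each statement's English description precedes it below -/
import Mathlib

section
/- Let A and Â be n×n real SPSD matrices with A ⪰ Â ⪰ 0, let 1 ≤ k < n and ε ≥ 0, and suppose that ‖A‖_F² − ‖Â_(k)‖_F² ≤ (1+ε)‖A − A_(k)‖_F². Then for every continuous operator monotone function f : [0,∞) → [0,∞), ‖f(A) − f(Â)_(k)‖_F² ≤ (1+ε)‖f(A) − f(A)_(k)‖_F². -/
open Matrix BigOperators
set_option maxHeartbeats 1000000

/-- `M = U * diagonal μ * Uᵀ` is a spectral (eigen)decomposition of the symmetric matrix `M`,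
with orthogonal `U` and eigenvalues `μ` listed in nonincreasing order. -/
def IsSpectralDecomp {n : ℕ} (M U : Matrix (Fin n) (Fin n) ℝ) (μ : Fin n → ℝ) : Prop :=
  Uᵀ * U = 1 ∧ Antitone μ ∧ M = U * Matrix.diagonal μ * Uᵀ

/-- Truncation of a spectral decomposition to its `k` largest (first `k`) eigenvalues:
the best rank-`k` approximation `M_(k)` associated with the decomposition `(U, μ)`. -/
noncomputable def trunc {n : ℕ} (k : ℕ) (U : Matrix (Fin n) (Fin n) ℝ) (μ : Fin n → ℝ) :
    Matrix (Fin n) (Fin n) ℝ :=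
  U * Matrix.diagonal (fun i : Fin n => if (i : ℕ) < k then μ i else 0) * Uᵀ

/-- `f` is operator monotone on SPSD matrices: for all `m` and all `m × m` SPSD matrices
`B ⪰ C ⪰ 0`, one has `f(B) ⪰ f(C)`, where matrix functions are computed through (any)
spectral decomposition. -/
def OperatorMonotone (f : ℝ → ℝ) : Prop :=
  ∀ (m : ℕ) (B C U V : Matrix (Fin m) (Fin m) ℝ) (β γ : Fin m → ℝ),
    IsSpectralDecomp B U β → IsSpectralDecomp C V γ →
    B.PosSemidef → C.PosSemidef → (B - C).PosSemidef →
    (U * Matrix.diagonal (f ∘ β) * Uᵀ - V * Matrix.diagonal (f ∘ γ) * Vᵀ).PosSemidef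

/-- Squared Frobenius norm `‖M‖_F² = Σ_{i,j} M_{ij}²`. -/
noncomputable def frobSq {m l : ℕ} (M : Matrix (Fin m) (Fin l) ℝ) : ℝ :=
  ∑ i, ∑ j, (M i j) ^ 2

/-- Frobenius norm. -/
noncomputable def frobNorm {m l : ℕ} (M : Matrix (Fin m) (Fin l) ℝ) : ℝ :=
  Real.sqrt (frobSq M)

/-- The eigenvalues of a Hermitian matrix listed in nonincreasing order:
`eigsDesc hM i` is the `(i+1)`-st largest eigenvalue of `M`. -/
noncomputable def eigsDesc {m : ℕ} {M : Matrix (Fin m) (Fin m) ℝ} (hM : M.IsHermitian) :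
    Fin m → ℝ :=
  fun i => (hM.eigenvalues ∘ Tuple.sort hM.eigenvalues) i.rev

/-- The singular values of `M` in nonincreasing order: `svDesc M i` is the `(i+1)`-st largest
singular value of `M`, i.e. the square root of the `(i+1)`-st largest eigenvalue of `MᴴM`. -/
noncomputable def svDesc {m l : ℕ} (M : Matrix (Fin m) (Fin l) ℝ) : Fin l → ℝ :=
  fun i => Real.sqrt (eigsDesc (Matrix.isHermitian_conjTranspose_mul_self M) i)

/-- Nuclear norm: the sum of the singular values. -/
noncomputable def nuclearNorm {m l : ℕ} (M : Matrix (Fin m) (Fin l) ℝ) : ℝ :=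
  ∑ i, svDesc M i

/-- Operator (spectral) norm: the largest singular value. -/
noncomputable def opNorm {m l : ℕ} (M : Matrix (Fin m) (Fin l) ℝ) : ℝ :=
  ⨆ i, svDesc M i

/-- `p`-th power of the Schatten `p`-norm: `‖M‖_(p)^p = Σᵢ σᵢ(M)^p`. -/
noncomputable def schattenPow {m l : ℕ} (p : ℝ) (M : Matrix (Fin m) (Fin l) ℝ) : ℝ :=
  ∑ i, svDesc M i ^ p

/-- Schatten `p`-norm: `‖M‖_(p) = (Σᵢ σᵢ(M)^p)^(1/p)`. -/
noncomputable def schattenNorm {m l : ℕ} (p : ℝ) (M : Matrix (Fin m) (Fin l) ℝ) : ℝ :=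
  (schattenPow p M) ^ (1 / p)

/-- `P` is the orthogonal projection onto the column space of `M`. -/
def IsOrthProjOnto {m l : ℕ} (P : Matrix (Fin m) (Fin m) ℝ) (M : Matrix (Fin m) (Fin l) ℝ) :
    Prop :=
  Pᵀ = P ∧ P * P = P ∧ P * M = M ∧ ∃ Y : Matrix (Fin l) (Fin m) ℝ, P = M * Y




section Aux
variable {n : ℕ}

lemma myTraceNonneg {M : Matrix (Fin n) (Fin n) ℝ} (hM : M.PosSemidef) : 0 ≤ M.trace := by
  rw [Matrix.trace]
  refine Finset.sum_nonneg fun i _ => ?_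
  have h := hM.dotProduct_mulVec_nonneg (Pi.single i 1)
  simpa [dotProduct, Matrix.mulVec, Pi.single_apply, Matrix.diag,
    Finset.mul_sum, Finset.sum_ite_eq, Finset.sum_ite_eq'] using h

lemma myTraceMulNonneg {M N : Matrix (Fin n) (Fin n) ℝ} (hM : M.PosSemidef)
    (hN : N.PosSemidef) : 0 ≤ (M * N).trace := by
  open scoped MatrixOrder in
  have h1 : CFC.sqrt M * CFC.sqrt M = M := CFC.sqrt_mul_sqrt_self M hM.nonneg
  have h2 : (M * N).trace = (CFC.sqrt M * N * CFC.sqrt M).trace := by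
    conv_lhs => rw [← h1]
    rw [Matrix.mul_assoc, Matrix.trace_mul_comm, Matrix.mul_assoc]
  rw [h2]
  have h3 : (CFC.sqrt M * N * (CFC.sqrt M)ᴴ).PosSemidef :=
    hN.mul_mul_conjTranspose_same (CFC.sqrt M)
  open scoped MatrixOrder in
  rw [(CFC.sqrt_nonneg M).posSemidef.1.eq] at h3
  exact myTraceNonneg h3

lemma frobSq_eq_trace {M : Matrix (Fin n) (Fin n) ℝ} : frobSq M = (M * Mᵀ).trace := by
  simp [frobSq, Matrix.trace, Matrix.mul_apply, Matrix.diag, sq]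

lemma frobSq_sub_expand (M N : Matrix (Fin n) (Fin n) ℝ) :
    frobSq (M - N) = frobSq M - 2 * (M * Nᵀ).trace + frobSq N := by
  simp only [frobSq, Matrix.trace, Matrix.mul_apply, Matrix.diag, Matrix.transpose_apply,
    Matrix.sub_apply, Finset.mul_sum]
  rw [← Finset.sum_sub_distrib, ← Finset.sum_add_distrib]
  refine Finset.sum_congr rfl fun i _ => ?_
  rw [← Finset.sum_sub_distrib, ← Finset.sum_add_distrib]
  refine Finset.sum_congr rfl fun j _ => by ring

end Aux

section Aux2
variable {n : ℕ}

lemma conj_mul_trace {U : Matrix (Fin n) (Fin n) ℝ} (hU : Uᵀ * U = 1) (d e : Fin n → ℝ) :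
    ((U * Matrix.diagonal d * Uᵀ) * (U * Matrix.diagonal e * Uᵀ)).trace = ∑ i, d i * e i := by
  have h : (U * Matrix.diagonal d * Uᵀ) * (U * Matrix.diagonal e * Uᵀ)
      = U * (Matrix.diagonal d * Matrix.diagonal e) * Uᵀ := by
    calc U * Matrix.diagonal d * Uᵀ * (U * Matrix.diagonal e * Uᵀ)
        = U * Matrix.diagonal d * (Uᵀ * U) * Matrix.diagonal e * Uᵀ := by
          simp only [Matrix.mul_assoc]
      _ = U * (Matrix.diagonal d * Matrix.diagonal e) * Uᵀ := by
          rw [hU]; simp only [Matrix.mul_assoc, Matrix.mul_one]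
  rw [h, Matrix.trace_mul_cycle, ← Matrix.mul_assoc, hU, Matrix.one_mul,
    Matrix.diagonal_mul_diagonal, Matrix.trace_diagonal]

lemma conj_sub (U : Matrix (Fin n) (Fin n) ℝ) (d e : Fin n → ℝ) :
    U * Matrix.diagonal d * Uᵀ - U * Matrix.diagonal e * Uᵀ
      = U * Matrix.diagonal (fun i => d i - e i) * Uᵀ := by
  rw [show Matrix.diagonal (fun i => d i - e i) = Matrix.diagonal d - Matrix.diagonal e from
    (Matrix.diagonal_sub d e).symm, Matrix.mul_sub, Matrix.sub_mul]

lemma conj_transpose_self (U : Matrix (Fin n) (Fin n) ℝ) (d : Fin n → ℝ) :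
    (U * Matrix.diagonal d * Uᵀ)ᵀ = U * Matrix.diagonal d * Uᵀ := by
  rw [Matrix.transpose_mul, Matrix.transpose_mul, Matrix.transpose_transpose,
    Matrix.diagonal_transpose, Matrix.mul_assoc]

lemma frobSq_conj {U : Matrix (Fin n) (Fin n) ℝ} (hU : Uᵀ * U = 1) (d : Fin n → ℝ) :
    frobSq (U * Matrix.diagonal d * Uᵀ) = ∑ i, d i ^ 2 := by
  rw [frobSq_eq_trace, conj_transpose_self, conj_mul_trace hU]
  exact Finset.sum_congr rfl fun i _ => (sq (d i)).symm

lemma quad_diag {V : Matrix (Fin n) (Fin n) ℝ} (hV : Vᵀ * V = 1) (ν : Fin n → ℝ)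
    (c : Fin n → ℝ) :
    (V *ᵥ c) ⬝ᵥ ((V * Matrix.diagonal ν * Vᵀ) *ᵥ (V *ᵥ c)) = ∑ j, ν j * c j ^ 2 := by
  have h1 : (V * Matrix.diagonal ν * Vᵀ) *ᵥ (V *ᵥ c)
      = V *ᵥ (Matrix.diagonal ν *ᵥ c) := by
    rw [Matrix.mulVec_mulVec]
    rw [show V * Matrix.diagonal ν * Vᵀ * V = V * Matrix.diagonal ν by
      rw [Matrix.mul_assoc, hV, Matrix.mul_one], ← Matrix.mulVec_mulVec]
  rw [h1, Matrix.dotProduct_mulVec, ← Matrix.mulVec_transpose]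
  have h2 : Vᵀ *ᵥ (V *ᵥ c) = c := by
    rw [Matrix.mulVec_mulVec, hV, Matrix.one_mulVec]
  rw [h2]
  simp [dotProduct, Matrix.mulVec_diagonal]
  exact Finset.sum_congr rfl fun i _ => by ring

lemma eig_nonneg {M V : Matrix (Fin n) (Fin n) ℝ} {ν : Fin n → ℝ} (hV : Vᵀ * V = 1)
    (hMdef : M = V * Matrix.diagonal ν * Vᵀ) (hM : M.PosSemidef) (i : Fin n) : 0 ≤ ν i := by
  have h := hM.dotProduct_mulVec_nonneg (V *ᵥ Pi.single i 1)
  rw [star_trivial, hMdef, quad_diag hV] at h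
  simpa [Pi.single_apply, sq, Finset.sum_ite_eq, Finset.sum_ite_eq'] using h

end Aux2




section Scalar

lemma antitoneFin2 {p q : ℝ} (h : q ≤ p) : Antitone ![p, q] := by
  intro u v huv
  fin_cases u <;> fin_cases v <;> simp_all [Fin.le_def]

lemma mk2_congr {a b c d a' b' c' d' : ℝ} (h1 : a = a') (h2 : b = b') (h3 : c = c')
    (h4 : d = d') : !![a, b; c, d] = !![a', b'; c', d'] := by
  rw [h1, h2, h3, h4]

lemma tr2 (a b c d : ℝ) : (!![a, b; c, d])ᵀ = !![a, c; b, d] := by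
  ext i j
  fin_cases i <;> fin_cases j <;> simp

lemma diag2 (s t : ℝ) : Matrix.diagonal ![s, t] = !![s, 0; 0, t] := by
  ext i j
  fin_cases i <;> fin_cases j <;> simp [Matrix.diagonal_apply]

lemma sub2 (a b c d a' b' c' d' : ℝ) :
    !![a, b; c, d] - !![a', b'; c', d'] = !![a - a', b - b'; c - c', d - d'] := by
  ext i j
  fin_cases i <;> fin_cases j <;> simp

lemma psd2 {p q r : ℝ} (hp : 0 ≤ p) (hr : 0 ≤ r) (hq : q ^ 2 ≤ p * r) (z0 z1 : ℝ) :
    0 ≤ p * z0 ^ 2 + 2 * q * z0 * z1 + r * z1 ^ 2 := by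
  rcases eq_or_lt_of_le hp with hp0 | hp0
  · have hq0 : q = 0 := by nlinarith [sq_nonneg q]
    rw [hq0, ← hp0]
    have := mul_nonneg hr (sq_nonneg z1)
    nlinarith
  · have key : 0 ≤ (p * z0 + q * z1) ^ 2 + (p * r - q ^ 2) * z1 ^ 2 := by
      have h1 := sq_nonneg (p * z0 + q * z1)
      have h2 : 0 ≤ (p * r - q ^ 2) * z1 ^ 2 := mul_nonneg (by linarith) (sq_nonneg _)
      linarith
    have heq : p * (p * z0 ^ 2 + 2 * q * z0 * z1 + r * z1 ^ 2)
        = (p * z0 + q * z1) ^ 2 + (p * r - q ^ 2) * z1 ^ 2 := by ring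
    nlinarith [key, heq]

lemma quad2 (p q r : ℝ) (z : Fin 2 → ℝ) :
    z ⬝ᵥ (!![p, q; q, r] *ᵥ z) = p * z 0 ^ 2 + 2 * q * z 0 * z 1 + r * z 1 ^ 2 := by
  simp [dotProduct, Matrix.mulVec, Fin.sum_univ_two]
  ring

lemma rot_conj (x1 x2 s t : ℝ) :
    !![x1, -x2; x2, x1] * Matrix.diagonal ![s, t] * (!![x1, -x2; x2, x1])ᵀ =
      !![s * x1 ^ 2 + t * x2 ^ 2, s * (x1 * x2) - t * (x1 * x2);
         s * (x1 * x2) - t * (x1 * x2), s * x2 ^ 2 + t * x1 ^ 2] := by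
  rw [diag2, tr2, Matrix.mul_fin_two, Matrix.mul_fin_two]
  exact mk2_congr (by ring) (by ring) (by ring) (by ring)

lemma swap_conj (s t : ℝ) :
    !![(0:ℝ), 1; 1, 0] * Matrix.diagonal ![s, t] * (!![(0:ℝ), 1; 1, 0])ᵀ = !![t, 0; 0, s] := by
  rw [diag2, tr2, Matrix.mul_fin_two, Matrix.mul_fin_two]
  exact mk2_congr (by ring) (by ring) (by ring) (by ring)

lemma opMono_mono {f : ℝ → ℝ} (hf : OperatorMonotone f) {a b : ℝ} (ha : 0 ≤ a) (hab : a ≤ b) :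
    f a ≤ f b := by
  have hb : 0 ≤ b := le_trans ha hab
  have hdecB : IsSpectralDecomp (Matrix.diagonal (fun _ : Fin 1 => b)) 1 (fun _ => b) :=
    ⟨by simp, antitone_const, by simp⟩
  have hdecC : IsSpectralDecomp (Matrix.diagonal (fun _ : Fin 1 => a)) 1 (fun _ => a) :=
    ⟨by simp, antitone_const, by simp⟩
  have hsub : Matrix.diagonal (fun _ : Fin 1 => b) - Matrix.diagonal (fun _ : Fin 1 => a)
      = Matrix.diagonal (fun _ : Fin 1 => b - a) := by
    rw [Matrix.diagonal_sub]
  have hpB : (Matrix.diagonal (fun _ : Fin 1 => b)).PosSemidef :=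
    Matrix.PosSemidef.diagonal fun _ => hb
  have hpC : (Matrix.diagonal (fun _ : Fin 1 => a)).PosSemidef :=
    Matrix.PosSemidef.diagonal fun _ => ha
  have hpBC : (Matrix.diagonal (fun _ : Fin 1 => b)
      - Matrix.diagonal (fun _ : Fin 1 => a)).PosSemidef := by
    rw [hsub]
    exact Matrix.PosSemidef.diagonal (by intro i; show (0:ℝ) ≤ b - a; linarith)
  have h := hf 1 (Matrix.diagonal (fun _ : Fin 1 => b)) (Matrix.diagonal (fun _ : Fin 1 => a))
    1 1 (fun _ => b) (fun _ => a) hdecB hdecC hpB hpC hpBC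
  have h2 : (Matrix.diagonal (f ∘ fun _ : Fin 1 => b)
      - Matrix.diagonal (f ∘ fun _ : Fin 1 => a)).PosSemidef := by simpa using h
  rw [Matrix.diagonal_sub] at h2
  have := Matrix.posSemidef_diagonal_iff.mp h2 0
  simp at this
  linarith

lemma opMono_key {f : ℝ → ℝ} (hf : OperatorMonotone f) (hfnn : ∀ x : ℝ, 0 ≤ x → 0 ≤ f x)
    {a b : ℝ} (ha : 0 < a) (hab : a ≤ b) : a * f b ≤ b * f a := by
  have hb : 0 < b := lt_of_lt_of_le ha hab
  rcases eq_or_lt_of_le (hfnn b hb.le) with hfb | hfb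
  · rw [← hfb]
    have := mul_nonneg hb.le (hfnn a ha.le)
    linarith
  suffices hY : ∀ Y : ℝ, b < Y → a * f b * (Y - b) ≤ b * f a * (Y - a) by
    by_contra hcon
    push_neg at hcon
    set g := a * f b - b * f a with hg
    have hgpos : 0 < g := by simp [hg]; linarith
    set D := a * f b * b - b * f a * a with hD
    set Y := max (b + 1) (D / g + 1) with hYdef
    have hbY : b < Y := lt_of_lt_of_le (by linarith) (le_max_left _ _)
    have h := hY Y hbY
    have h2 : g * Y ≤ D := by nlinarith [h]
    have h3 : D / g + 1 ≤ Y := le_max_right _ _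
    have h4 : D + g ≤ g * Y := by
      have := mul_le_mul_of_nonneg_left h3 hgpos.le
      rw [mul_add, mul_one, mul_div_cancel₀ _ (ne_of_gt hgpos)] at this
      linarith
    linarith
  intro Y hbY
  have hYa : 0 < Y - a := by linarith
  have hYb : 0 < Y - b := by linarith
  have hY0 : 0 < Y := by linarith
  set w : ℝ := a * (Y - b) / (b * (Y - a)) with hw
  have hw0 : 0 < w := by positivity
  have hw1 : w ≤ 1 := by
    rw [hw, div_le_one (by positivity)]
    nlinarith
  set x1 : ℝ := Real.sqrt w with hx1
  set x2 : ℝ := Real.sqrt (1 - w) with hx2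
  have x1sq : x1 ^ 2 = w := Real.sq_sqrt hw0.le
  have x2sq : x2 ^ 2 = 1 - w := Real.sq_sqrt (by linarith)
  have x1nn : 0 ≤ x1 := Real.sqrt_nonneg _
  have x2nn : 0 ≤ x2 := Real.sqrt_nonneg _
  -- the matrices
  set P : Matrix (Fin 2) (Fin 2) ℝ := !![0, 1; 1, 0] with hP
  set V2 : Matrix (Fin 2) (Fin 2) ℝ := !![x1, -x2; x2, x1] with hV2
  set B : Matrix (Fin 2) (Fin 2) ℝ := P * Matrix.diagonal ![Y, a] * Pᵀ with hB
  set C : Matrix (Fin 2) (Fin 2) ℝ := V2 * Matrix.diagonal ![b, 0] * V2ᵀ with hC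
  have hPorth : Pᵀ * P = 1 := by
    rw [hP, tr2, Matrix.mul_fin_two, Matrix.one_fin_two]
    exact mk2_congr (by ring) (by ring) (by ring) (by ring)
  have hVorth : V2ᵀ * V2 = 1 := by
    rw [hV2, tr2, Matrix.mul_fin_two, Matrix.one_fin_two]
    exact mk2_congr (by nlinarith [x1sq, x2sq]) (by ring) (by ring) (by nlinarith [x1sq, x2sq])
  have hBent : B = !![a, 0; 0, Y] := by rw [hB, hP, swap_conj]
  have hCent : C = !![b * x1 ^ 2, b * (x1 * x2); b * (x1 * x2), b * x2 ^ 2] := by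
    rw [hC, hV2, rot_conj]
    exact mk2_congr (by ring) (by ring) (by ring) (by ring)
  have hdecB : IsSpectralDecomp B P ![Y, a] := ⟨hPorth, antitoneFin2 (by linarith), rfl⟩
  have hdecC : IsSpectralDecomp C V2 ![b, 0] := ⟨hVorth, antitoneFin2 hb.le, rfl⟩
  have hpsdB : B.PosSemidef := by
    rw [hB]
    have hd : (Matrix.diagonal ![Y, a]).PosSemidef :=
      Matrix.PosSemidef.diagonal (by intro i; fin_cases i <;> simp <;> linarith)
    have h := hd.mul_mul_conjTranspose_same P
    rwa [Matrix.conjTranspose_eq_transpose_of_trivial] at h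
  have hpsdC : C.PosSemidef := by
    rw [hC]
    have hd : (Matrix.diagonal ![b, 0]).PosSemidef :=
      Matrix.PosSemidef.diagonal (by intro i; fin_cases i <;> simp <;> linarith)
    have h := hd.mul_mul_conjTranspose_same V2
    rwa [Matrix.conjTranspose_eq_transpose_of_trivial] at h
  -- B - C is psd
  have hp : 0 ≤ a - b * w := by
    rw [sub_nonneg, hw, ← mul_div_assoc, div_le_iff₀ (by positivity)]
    nlinarith [mul_le_mul_of_nonneg_left hab (mul_nonneg ha.le hb.le)]
  have hr : 0 ≤ Y - b * (1 - w) := by nlinarith [mul_nonneg hb.le hw0.le]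
  have hdet : (b * (x1 * x2)) ^ 2 = (a - b * x1 ^ 2) * (Y - b * x2 ^ 2) := by
    have h1 : (b * (x1 * x2)) ^ 2 = b ^ 2 * x1 ^ 2 * x2 ^ 2 := by ring
    rw [h1, x1sq, x2sq, hw]
    field_simp
    ring
  have hpsdBC : (B - C).PosSemidef := by
    rw [hBent, hCent, sub2]
    refine Matrix.PosSemidef.of_dotProduct_mulVec_nonneg ?_ ?_
    · rw [Matrix.IsHermitian, Matrix.conjTranspose_eq_transpose_of_trivial, tr2]
    · intro z
      rw [star_trivial]
      have hq : (!![a - b * x1 ^ 2, 0 - b * (x1 * x2); 0 - b * (x1 * x2), Y - b * x2 ^ 2]) =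
          !![a - b * x1 ^ 2, -(b * (x1 * x2)); -(b * (x1 * x2)), Y - b * x2 ^ 2] :=
        mk2_congr rfl (by ring) (by ring) rfl
      rw [hq, quad2]
      have := psd2 (p := a - b * x1 ^ 2) (q := -(b * (x1 * x2))) (r := Y - b * x2 ^ 2)
        (by rw [x1sq]; exact hp) (by rw [x2sq]; exact hr)
        (le_of_eq (by linear_combination hdet)) (z 0) (z 1)
      linarith [this]
  have hmain := hf 2 B C P V2 ![Y, a] ![b, 0] hdecB hdecC hpsdB hpsdC hpsdBC
  -- extract the master inequality
  have master : ∀ z0 z1 : ℝ, f b * (x1 * z0 + x2 * z1) ^ 2 ≤ f a * z0 ^ 2 + f Y * z1 ^ 2 := by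
    intro z0 z1
    have h := hmain.dotProduct_mulVec_nonneg ![z0, z1]
    rw [star_trivial] at h
    have hBf : P * Matrix.diagonal (f ∘ ![Y, a]) * Pᵀ = !![f a, 0; 0, f Y] := by
      have hfun : (f ∘ ![Y, a]) = ![f Y, f a] := by
        funext i; fin_cases i <;> simp
      rw [hfun, hP, swap_conj]
    have hCf : V2 * Matrix.diagonal (f ∘ ![b, 0]) * V2ᵀ =
        !![f b * x1 ^ 2 + f 0 * x2 ^ 2, f b * (x1 * x2) - f 0 * (x1 * x2);
           f b * (x1 * x2) - f 0 * (x1 * x2), f b * x2 ^ 2 + f 0 * x1 ^ 2] := by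
      have hfun : (f ∘ ![b, 0]) = ![f b, f 0] := by
        funext i; fin_cases i <;> simp
      rw [hfun, hV2, rot_conj]
    rw [hBf, hCf, sub2, quad2] at h
    simp only [Matrix.cons_val_zero, Matrix.cons_val_one, Matrix.head_cons] at h
    have hf0 : 0 ≤ f 0 := hfnn 0 le_rfl
    nlinarith [h, mul_nonneg hf0 (sq_nonneg (x2 * z0 - x1 * z1))]
  -- choose test vectors
  have hfa : 0 < f a := by
    by_contra hfa
    push_neg at hfa
    have h := master 1 0
    have hfa0 : f a = 0 := le_antisymm hfa (hfnn a ha.le)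
    rw [hfa0] at h
    nlinarith [x1sq, hw0, hfb]
  have hfY : 0 < f Y := lt_of_lt_of_le hfb (opMono_mono hf hb.le hbY.le)
  have hkey : f b * w ≤ f a := by
    have h := master (x1 / f a) (x2 / f Y)
    have hs : x1 * (x1 / f a) + x2 * (x2 / f Y) = w / f a + (1 - w) / f Y := by
      rw [← mul_div_assoc, ← mul_div_assoc]
      rw [show x1 * x1 = w by nlinarith [x1sq], show x2 * x2 = 1 - w by nlinarith [x2sq]]
    rw [hs] at h
    have hrhs : f a * (x1 / f a) ^ 2 + f Y * (x2 / f Y) ^ 2 = w / f a + (1 - w) / f Y := by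
      rw [div_pow, div_pow, x1sq, x2sq]
      field_simp
    rw [hrhs] at h
    have h1 : 0 < w / f a := by positivity
    have h2 : 0 ≤ (1 - w) / f Y := div_nonneg (by linarith) hfY.le
    have hspos : 0 < w / f a + (1 - w) / f Y := by linarith
    have hfbs : f b * (w / f a + (1 - w) / f Y) ≤ 1 := by
      nlinarith [h, hspos]
    have hfin : f b * (w / f a) ≤ 1 :=
      le_trans (mul_le_mul_of_nonneg_left (by linarith) hfb.le) hfbs
    rw [← mul_div_assoc, div_le_one hfa] at hfin
    exact hfin
  -- conclude
  have hww : w * (b * (Y - a)) = a * (Y - b) := by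
    rw [hw]
    field_simp
  nlinarith [mul_le_mul_of_nonneg_right hkey (show (0:ℝ) ≤ b * (Y - a) by positivity), hww,
    hfb.le]

end Scalar

section Weyl
variable {n : ℕ}

lemma weyl {A Ahat U V : Matrix (Fin n) (Fin n) ℝ} {μ ν : Fin n → ℝ}
    (hAAhat : (A - Ahat).PosSemidef)
    (hU : Uᵀ * U = 1) (hμ : Antitone μ) (hAdef : A = U * Matrix.diagonal μ * Uᵀ)
    (hV : Vᵀ * V = 1) (hν : Antitone ν) (hAhdef : Ahat = V * Matrix.diagonal ν * Vᵀ)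
    (i : Fin n) : ν i ≤ μ i := by
  have hU' : U * Uᵀ = 1 := mul_eq_one_comm.mp hU
  set W : Matrix (Fin n) (Fin n) ℝ := Uᵀ * V with hWdef
  have hWtW : Wᵀ * W = 1 := by
    rw [hWdef, Matrix.transpose_mul, Matrix.transpose_transpose, Matrix.mul_assoc,
      ← Matrix.mul_assoc U, hU', Matrix.one_mul, hV]
  -- the linear map encoding the constraints
  set T : (Fin n → ℝ) →ₗ[ℝ] (Fin n → ℝ) :=
    { toFun := fun c j => if (j : ℕ) < (i : ℕ) then (W *ᵥ c) j
        else if (i : ℕ) < (j : ℕ) then c j else 0,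
      map_add' := by
        intro x y; funext j
        simp only [Matrix.mulVec_add, Pi.add_apply]
        split_ifs <;> simp
      map_smul' := by
        intro r x; funext j
        simp only [Matrix.mulVec_smul, Pi.smul_apply, RingHom.id_apply, smul_eq_mul]
        split_ifs <;> simp } with hTdef
  have hTnotinj : ¬ Function.Injective T := by
    intro hinj
    have h1 : LinearMap.range T ≤
        LinearMap.ker (LinearMap.proj (R := ℝ) (φ := fun _ : Fin n => ℝ) i) := by
      rintro x ⟨c, rfl⟩
      simp [LinearMap.mem_ker, hTdef]
    have h2 : LinearMap.ker (LinearMap.proj (R := ℝ) (φ := fun _ : Fin n => ℝ) i) < ⊤ := by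
      rw [lt_top_iff_ne_top]
      intro hh
      have hmem : (Pi.single i 1 : Fin n → ℝ) ∈
          LinearMap.ker (LinearMap.proj (R := ℝ) (φ := fun _ : Fin n => ℝ) i) := by
        rw [hh]; trivial
      simp [LinearMap.mem_ker] at hmem
    have h3 := Submodule.finrank_lt (K := ℝ) (V := Fin n → ℝ) h2.ne
    have h4 := LinearMap.finrank_range_of_inj hinj
    have h5 := Submodule.finrank_mono h1
    rw [h4] at h5
    have h6 : Module.finrank ℝ (Fin n → ℝ) = n := Module.finrank_fin_fun ℝ
    omega
  obtain ⟨x, y, hxy, hne⟩ := Function.not_injective_iff.mp hTnotinj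
  set c : Fin n → ℝ := x - y with hcdef
  have hc0 : c ≠ 0 := sub_ne_zero.mpr hne
  have hTc : T c = 0 := by rw [hcdef, map_sub, hxy, sub_self]
  have hd0 : ∀ j : Fin n, (j : ℕ) < (i : ℕ) → (W *ᵥ c) j = 0 := by
    intro j hj
    have h := congrFun hTc j
    simp only [hTdef, LinearMap.coe_mk, AddHom.coe_mk, Pi.zero_apply] at h
    rwa [if_pos hj] at h
  have hctail : ∀ j : Fin n, (i : ℕ) < (j : ℕ) → c j = 0 := by
    intro j hj
    have h := congrFun hTc j
    simp only [hTdef, LinearMap.coe_mk, AddHom.coe_mk, Pi.zero_apply] at h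
    rwa [if_neg (by omega), if_pos hj] at h
  set d : Fin n → ℝ := W *ᵥ c with hddef
  have hsum : d ⬝ᵥ d = c ⬝ᵥ c := by
    rw [hddef, Matrix.dotProduct_mulVec, ← Matrix.mulVec_transpose, Matrix.mulVec_mulVec,
      hWtW, Matrix.one_mulVec]
  have hVc : V *ᵥ c = U *ᵥ d := by
    rw [hddef, hWdef, Matrix.mulVec_mulVec, ← Matrix.mul_assoc, hU', Matrix.one_mul]
  have hxA : (V *ᵥ c) ⬝ᵥ (A *ᵥ (V *ᵥ c)) = ∑ j, μ j * d j ^ 2 := by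
    rw [hVc, hAdef, quad_diag hU]
  have hxAh : (V *ᵥ c) ⬝ᵥ (Ahat *ᵥ (V *ᵥ c)) = ∑ j, ν j * c j ^ 2 := by
    rw [hAhdef, quad_diag hV]
  have hPSD := hAAhat.dotProduct_mulVec_nonneg (V *ᵥ c)
  rw [star_trivial, Matrix.sub_mulVec, dotProduct_sub, sub_nonneg, hxA, hxAh] at hPSD
  have hb1 : ν i * ∑ j, c j ^ 2 ≤ ∑ j, ν j * c j ^ 2 := by
    rw [Finset.mul_sum]
    refine Finset.sum_le_sum fun j _ => ?_
    by_cases hj : (i : ℕ) < (j : ℕ)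
    · rw [hctail j hj]; simp
    · have hji : j ≤ i := by rw [Fin.le_def]; omega
      exact mul_le_mul_of_nonneg_right (hν hji) (sq_nonneg _)
  have hb2 : ∑ j, μ j * d j ^ 2 ≤ μ i * ∑ j, d j ^ 2 := by
    rw [Finset.mul_sum]
    refine Finset.sum_le_sum fun j _ => ?_
    by_cases hj : (j : ℕ) < (i : ℕ)
    · rw [hd0 j hj]; simp
    · have hij : i ≤ j := by rw [Fin.le_def]; omega
      exact mul_le_mul_of_nonneg_right (hμ hij) (sq_nonneg _)
  have hdd : ∑ j, d j ^ 2 = ∑ j, c j ^ 2 := by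
    have h := hsum
    simpa [dotProduct, sq] using h
  have hcpos : 0 < ∑ j, c j ^ 2 := by
    obtain ⟨j, hj⟩ := Function.ne_iff.mp hc0
    refine Finset.sum_pos' (fun l _ => sq_nonneg _) ⟨j, Finset.mem_univ j, ?_⟩
    have : c j ≠ 0 := by simpa using hj
    exact lt_of_le_of_ne (sq_nonneg _) (Ne.symm (pow_ne_zero 2 this))
  have hchain : ν i * ∑ j, c j ^ 2 ≤ μ i * ∑ j, c j ^ 2 := by
    calc ν i * ∑ j, c j ^ 2 ≤ ∑ j, ν j * c j ^ 2 := hb1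
      _ ≤ ∑ j, μ j * d j ^ 2 := hPSD
      _ ≤ μ i * ∑ j, d j ^ 2 := hb2
      _ = μ i * ∑ j, c j ^ 2 := by rw [hdd]
  exact (mul_le_mul_iff_of_pos_right hcpos).mp hchain

end Weyl

section Step
variable {n : ℕ}

lemma sum_split (k : ℕ) (g : Fin n → ℝ) :
    ∑ i : Fin n, g i = (∑ i : Fin n, if (i : ℕ) < k then g i else 0) + ∑ i : Fin n, (if (i : ℕ) < k then 0 else g i) := by
  rw [← Finset.sum_add_distrib]
  exact Finset.sum_congr rfl fun i _ => by split_ifs <;> ring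

lemma sum_ite_sub (k : ℕ) (g h : Fin n → ℝ) :
    (∑ i : Fin n, if (i : ℕ) < k then g i else 0) - (∑ i : Fin n, if (i : ℕ) < k then h i else 0)
      = ∑ i : Fin n, if (i : ℕ) < k then g i - h i else 0 := by
  rw [← Finset.sum_sub_distrib]
  exact Finset.sum_congr rfl fun i _ => by split_ifs <;> ring

lemma scalar_step {k : ℕ} (hkn : k < n) {μ ν : Fin n → ℝ} {ε : ℝ} (hε : 0 ≤ ε)
    (hμa : Antitone μ) (hμ0 : ∀ i, 0 ≤ μ i) (hν0 : ∀ i, 0 ≤ ν i) (hwl : ∀ i, ν i ≤ μ i)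
    {f : ℝ → ℝ}
    (hmono : ∀ {a b : ℝ}, 0 ≤ a → a ≤ b → f a ≤ f b)
    (hkey : ∀ {a b : ℝ}, 0 < a → a ≤ b → a * f b ≤ b * f a)
    (hfnn : ∀ x : ℝ, 0 ≤ x → 0 ≤ f x)
    (h1 : (∑ i : Fin n, (if (i : ℕ) < k then μ i ^ 2 - ν i ^ 2 else 0)) ≤
      ε * ∑ i : Fin n, (if (i : ℕ) < k then 0 else μ i ^ 2)) :
    (∑ i : Fin n, (if (i : ℕ) < k then f (μ i) ^ 2 - f (ν i) ^ 2 else 0)) ≤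
      ε * ∑ i : Fin n, (if (i : ℕ) < k then 0 else f (μ i) ^ 2) := by
  set t : ℝ := μ ⟨k, hkn⟩ with htdef
  rcases (hμ0 ⟨k, hkn⟩).eq_or_lt with ht | ht
  · -- t = 0 : tail of μ vanishes, hence μ = ν on the head
    have hμtail : ∀ i : Fin n, ¬((i : ℕ) < k) → μ i = 0 := by
      intro i hi
      have hki : (⟨k, hkn⟩ : Fin n) ≤ i := by rw [Fin.le_def]; simp; omega
      exact le_antisymm (ht ▸ hμa hki) (hμ0 i)
    have hS0 : (∑ i : Fin n, if (i : ℕ) < k then (0:ℝ) else μ i ^ 2) = 0 := by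
      refine Finset.sum_eq_zero fun i _ => ?_
      split_ifs with h
      · rfl
      · rw [hμtail i h]; ring
    rw [hS0, mul_zero] at h1
    have hterm : ∀ i : Fin n, i ∈ Finset.univ → (0:ℝ) ≤ if (i : ℕ) < k then μ i ^ 2 - ν i ^ 2 else 0 := by
      intro i _
      split_ifs with h
      · nlinarith [hwl i, hν0 i]
      · exact le_rfl
    have hall := (Finset.sum_eq_zero_iff_of_nonneg hterm).mp
      (le_antisymm h1 (Finset.sum_nonneg hterm))
    have hLHS : (∑ i : Fin n, if (i : ℕ) < k then f (μ i) ^ 2 - f (ν i) ^ 2 else 0) = 0 := by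
      refine Finset.sum_eq_zero fun i _ => ?_
      split_ifs with h
      · have h0 := hall i (Finset.mem_univ i)
        rw [if_pos h] at h0
        have : μ i = ν i := by nlinarith [hwl i, hν0 i]
        rw [this]; ring
      · rfl
    rw [hLHS]
    exact mul_nonneg hε (Finset.sum_nonneg fun i _ => by split_ifs; exacts [le_rfl, sq_nonneg _])
  · -- t > 0
    have claimH : ∀ i : Fin n, (i : ℕ) < k →
        t ^ 2 * (f (μ i) ^ 2 - f (ν i) ^ 2) ≤ f t ^ 2 * (μ i ^ 2 - ν i ^ 2) := by
      intro i hik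
      have hik' : i ≤ (⟨k, hkn⟩ : Fin n) := by rw [Fin.le_def]; simp; omega
      have hti : t ≤ μ i := hμa hik'
      have hμi : 0 < μ i := lt_of_lt_of_le ht hti
      have fμnn : 0 ≤ f (μ i) := hfnn _ hμi.le
      have h₁ : t * f (μ i) ≤ μ i * f t := hkey ht hti
      have h₂ : ν i * f (μ i) ≤ μ i * f (ν i) := by
        rcases (hν0 i).eq_or_lt with hνi | hνi
        · rw [← hνi, zero_mul]
          exact mul_nonneg hμi.le (hfnn 0 le_rfl)
        · exact hkey hνi (hwl i)
      have h1sq : (t * f (μ i)) ^ 2 ≤ (μ i * f t) ^ 2 :=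
        pow_le_pow_left₀ (mul_nonneg ht.le fμnn) h₁ 2
      have h2sq : (ν i * f (μ i)) ^ 2 ≤ (μ i * f (ν i)) ^ 2 :=
        pow_le_pow_left₀ (mul_nonneg (hν0 i) fμnn) h₂ 2
      have hsq : ν i ^ 2 ≤ μ i ^ 2 := pow_le_pow_left₀ (hν0 i) (hwl i) 2
      have hgoal' : (μ i) ^ 2 * (t ^ 2 * (f (μ i) ^ 2 - f (ν i) ^ 2)) ≤
          (μ i) ^ 2 * (f t ^ 2 * (μ i ^ 2 - ν i ^ 2)) := by
        nlinarith [mul_le_mul_of_nonneg_right h1sq (sub_nonneg.mpr hsq),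
          mul_le_mul_of_nonneg_left h2sq (sq_nonneg t)]
      exact le_of_mul_le_mul_left hgoal' (by positivity)
    have claimT : ∀ i : Fin n, ¬((i : ℕ) < k) →
        f t ^ 2 * μ i ^ 2 ≤ t ^ 2 * f (μ i) ^ 2 := by
      intro i hik
      have hik' : (⟨k, hkn⟩ : Fin n) ≤ i := by rw [Fin.le_def]; simp; omega
      have hit : μ i ≤ t := hμa hik'
      rcases (hμ0 i).eq_or_lt with hμi | hμi
      · rw [← hμi]
        have : (0:ℝ) ≤ t ^ 2 * f 0 ^ 2 := by positivity
        simpa using this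
      · have h := hkey hμi hit
        have hs := pow_le_pow_left₀ (mul_nonneg (hμ0 i) (hfnn t (lt_of_lt_of_le hμi hit).le)) h 2
        nlinarith [hs]
    have main : t ^ 2 * (∑ i : Fin n, if (i : ℕ) < k then f (μ i) ^ 2 - f (ν i) ^ 2 else 0) ≤
        t ^ 2 * (ε * ∑ i : Fin n, (if (i : ℕ) < k then 0 else f (μ i) ^ 2)) := by
      calc t ^ 2 * (∑ i : Fin n, if (i : ℕ) < k then f (μ i) ^ 2 - f (ν i) ^ 2 else 0)
          = ∑ i : Fin n, (if (i : ℕ) < k then t ^ 2 * (f (μ i) ^ 2 - f (ν i) ^ 2) else 0) := by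
            rw [Finset.mul_sum]
            exact Finset.sum_congr rfl fun i _ => by split_ifs <;> ring
        _ ≤ ∑ i : Fin n, (if (i : ℕ) < k then f t ^ 2 * (μ i ^ 2 - ν i ^ 2) else 0) := by
            refine Finset.sum_le_sum fun i _ => ?_
            split_ifs with h
            · exact claimH i h
            · exact le_rfl
        _ = f t ^ 2 * ∑ i : Fin n, (if (i : ℕ) < k then μ i ^ 2 - ν i ^ 2 else 0) := by
            rw [Finset.mul_sum]
            exact Finset.sum_congr rfl fun i _ => by split_ifs <;> ring
        _ ≤ f t ^ 2 * (ε * ∑ i : Fin n, (if (i : ℕ) < k then 0 else μ i ^ 2)) :=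
            mul_le_mul_of_nonneg_left h1 (sq_nonneg _)
        _ = ε * ∑ i : Fin n, (if (i : ℕ) < k then 0 else f t ^ 2 * μ i ^ 2) := by
            rw [Finset.mul_sum, Finset.mul_sum, Finset.mul_sum]
            exact Finset.sum_congr rfl fun i _ => by split_ifs <;> ring
        _ ≤ ε * ∑ i : Fin n, (if (i : ℕ) < k then 0 else t ^ 2 * f (μ i) ^ 2) := by
            refine mul_le_mul_of_nonneg_left ?_ hε
            refine Finset.sum_le_sum fun i _ => ?_
            split_ifs with h
            · exact le_rfl
            · exact claimT i h
        _ = t ^ 2 * (ε * ∑ i : Fin n, (if (i : ℕ) < k then 0 else f (μ i) ^ 2)) := by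
            rw [Finset.mul_sum, Finset.mul_sum, Finset.mul_sum]
            exact Finset.sum_congr rfl fun i _ => by split_ifs <;> ring
    exact le_of_mul_le_mul_left main (by positivity)

end Step

/-- Frobenius-norm transfer theorem: if `A ⪰ Â ⪰ 0` and
`‖A‖_F² − ‖Â_(k)‖_F² ≤ (1+ε)‖A − A_(k)‖_F²`, then for every continuous operator monotone
`f : [0,∞) → [0,∞)`, `‖f(A) − f(Â)_(k)‖_F² ≤ (1+ε)‖f(A) − f(A)_(k)‖_F²`. -/
theorem frobenius_nystrom_to_funNystrom
    (n k : ℕ) (hk : 1 ≤ k) (hkn : k < n) (ε : ℝ) (hε : 0 ≤ ε)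
    (A Ahat U V : Matrix (Fin n) (Fin n) ℝ) (μ ν : Fin n → ℝ)
    (hA : A.PosSemidef) (hAhat : Ahat.PosSemidef) (hAAhat : (A - Ahat).PosSemidef)
    (hdecA : IsSpectralDecomp A U μ) (hdecAhat : IsSpectralDecomp Ahat V ν)
    (hnear : frobSq A - frobSq (trunc k V ν) ≤ (1 + ε) * frobSq (A - trunc k U μ))
    (f : ℝ → ℝ) (hfc : ContinuousOn f (Set.Ici 0)) (hfmono : OperatorMonotone f)
    (hfnn : ∀ x : ℝ, 0 ≤ x → 0 ≤ f x) :
    frobSq (U * Matrix.diagonal (f ∘ μ) * Uᵀ - trunc k V (f ∘ ν)) ≤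
      (1 + ε) * frobSq (U * Matrix.diagonal (f ∘ μ) * Uᵀ - trunc k U (f ∘ μ)) := by
  obtain ⟨hU, hμa, hAdef⟩ := hdecA
  obtain ⟨hV, hνa, hAhdef⟩ := hdecAhat
  have hμ0 : ∀ i, 0 ≤ μ i := fun i => eig_nonneg hU hAdef hA i
  have hν0 : ∀ i, 0 ≤ ν i := fun i => eig_nonneg hV hAhdef hAhat i
  have hwl : ∀ i, ν i ≤ μ i := weyl hAAhat hU hμa hAdef hV hνa hAhdef
  -- reduce the hypothesis to a scalar inequality
  have hfrA : frobSq A = ∑ i : Fin n, μ i ^ 2 := by rw [hAdef, frobSq_conj hU]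
  have hfrTV : frobSq (trunc k V ν) = ∑ i : Fin n, (if (i : ℕ) < k then ν i ^ 2 else 0) := by
    rw [show trunc k V ν
        = V * Matrix.diagonal (fun i : Fin n => if (i : ℕ) < k then ν i else 0) * Vᵀ from rfl,
      frobSq_conj hV]
    exact Finset.sum_congr rfl fun i _ => by split_ifs <;> simp
  have hfrAU : frobSq (A - trunc k U μ)
      = ∑ i : Fin n, (if (i : ℕ) < k then 0 else μ i ^ 2) := by
    rw [hAdef, show trunc k U μ
        = U * Matrix.diagonal (fun i : Fin n => if (i : ℕ) < k then μ i else 0) * Uᵀ from rfl,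
      conj_sub, frobSq_conj hU]
    exact Finset.sum_congr rfl fun i _ => by split_ifs <;> ring
  rw [hfrA, hfrTV, hfrAU] at hnear
  have hsplitμ := sum_split k (fun i => μ i ^ 2)
  have hsubμν := sum_ite_sub k (fun i => μ i ^ 2) (fun i => ν i ^ 2)
  have h1 : (∑ i : Fin n, (if (i : ℕ) < k then μ i ^ 2 - ν i ^ 2 else 0)) ≤
      ε * ∑ i : Fin n, (if (i : ℕ) < k then 0 else μ i ^ 2) := by
    nlinarith [hnear, hsplitμ, hsubμν]
  have h2 := scalar_step hkn hε hμa hμ0 hν0 hwl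
    (fun {a b} ha hab => opMono_mono hfmono ha hab)
    (fun {a b} ha hab => opMono_key hfmono hfnn ha hab) hfnn h1
  -- the matrix side
  have hdiff : (U * Matrix.diagonal (f ∘ μ) * Uᵀ
      - V * Matrix.diagonal (f ∘ ν) * Vᵀ).PosSemidef :=
    hfmono n A Ahat U V μ ν ⟨hU, hμa, hAdef⟩ ⟨hV, hνa, hAhdef⟩ hA hAhat hAAhat
  set eν : Fin n → ℝ := fun i : Fin n => if (i : ℕ) < k then (f ∘ ν) i else 0 with heν
  have htrunc1 : trunc k V (f ∘ ν) = V * Matrix.diagonal eν * Vᵀ := rfl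
  have hPpsd : (V * Matrix.diagonal eν * Vᵀ).PosSemidef := by
    have hd : (Matrix.diagonal eν).PosSemidef := by
      refine Matrix.PosSemidef.diagonal ?_
      intro i
      show (0:ℝ) ≤ eν i
      rw [heν]
      dsimp only
      split_ifs with h
      · exact hfnn _ (hν0 i)
      · exact le_rfl
    have h := hd.mul_mul_conjTranspose_same V
    rwa [Matrix.conjTranspose_eq_transpose_of_trivial] at h
  have htr1 : 0 ≤ ((U * Matrix.diagonal (f ∘ μ) * Uᵀ - V * Matrix.diagonal (f ∘ ν) * Vᵀ)
      * (V * Matrix.diagonal eν * Vᵀ)).trace := myTraceMulNonneg hdiff hPpsd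
  have htr2 : ((V * Matrix.diagonal (f ∘ ν) * Vᵀ) * (V * Matrix.diagonal eν * Vᵀ)).trace
      = ∑ i : Fin n, (if (i : ℕ) < k then f (ν i) ^ 2 else 0) := by
    rw [conj_mul_trace hV]
    refine Finset.sum_congr rfl fun i _ => ?_
    show f (ν i) * (if (i : ℕ) < k then f (ν i) else 0) = _
    split_ifs <;> ring
  have hfrobP : frobSq (V * Matrix.diagonal eν * Vᵀ)
      = ∑ i : Fin n, (if (i : ℕ) < k then f (ν i) ^ 2 else 0) := by
    rw [frobSq_conj hV]
    refine Finset.sum_congr rfl fun i _ => ?_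
    show (if (i : ℕ) < k then f (ν i) else 0) ^ 2 = _
    split_ifs <;> ring
  have htrsub : ((U * Matrix.diagonal (f ∘ μ) * Uᵀ) * (V * Matrix.diagonal eν * Vᵀ)).trace
      - ((V * Matrix.diagonal (f ∘ ν) * Vᵀ) * (V * Matrix.diagonal eν * Vᵀ)).trace
      = ((U * Matrix.diagonal (f ∘ μ) * Uᵀ - V * Matrix.diagonal (f ∘ ν) * Vᵀ)
          * (V * Matrix.diagonal eν * Vᵀ)).trace := by
    rw [Matrix.sub_mul, Matrix.trace_sub]
  have hexp := frobSq_sub_expand (U * Matrix.diagonal (f ∘ μ) * Uᵀ)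
    (V * Matrix.diagonal eν * Vᵀ)
  rw [conj_transpose_self] at hexp
  have hfrX : frobSq (U * Matrix.diagonal (f ∘ μ) * Uᵀ) = ∑ i : Fin n, f (μ i) ^ 2 := by
    rw [frobSq_conj hU]
    exact Finset.sum_congr rfl fun i _ => rfl
  have hfrR : frobSq (U * Matrix.diagonal (f ∘ μ) * Uᵀ - trunc k U (f ∘ μ))
      = ∑ i : Fin n, (if (i : ℕ) < k then 0 else f (μ i) ^ 2) := by
    rw [show trunc k U (f ∘ μ)
        = U * Matrix.diagonal (fun i : Fin n => if (i : ℕ) < k then (f ∘ μ) i else 0) * Uᵀ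
        from rfl, conj_sub, frobSq_conj hU]
    refine Finset.sum_congr rfl fun i _ => ?_
    show (f (μ i) - (if (i : ℕ) < k then f (μ i) else 0)) ^ 2 = _
    split_ifs <;> ring
  have hsplitf := sum_split k (fun i => f (μ i) ^ 2)
  have hsubf := sum_ite_sub k (fun i => f (μ i) ^ 2) (fun i => f (ν i) ^ 2)
  rw [htrunc1, hfrR]
  rw [htr2] at htrsub
  nlinarith [hexp, htr1, htrsub, hfrobP, hfrX, hsplitf, hsubf, h2]
end

section
/- Let A and B be n×n real SPSD matrices, let 1 ≤ k < n and ε ≥ 0, and suppose that ‖A − B‖₂ ≤ (1+ε)‖A − A_(k)‖₂. Let r = rank(B). Then for every continuous operator monotone function f : [0,∞) → [0,∞), ‖f(A) − f(B)_(r)‖₂ ≤ (1+ε)‖f(A) − f(A)_(k)‖₂. -/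
open Matrix BigOperators

namespace Aux

lemma psd_quad {m : ℕ} {M : Matrix (Fin m) (Fin m) ℝ} (h : M.PosSemidef) (x : Fin m → ℝ) :
    0 ≤ x ⬝ᵥ (M *ᵥ x) := by simpa using h.dotProduct_mulVec_nonneg x

lemma psd_of_quad {m : ℕ} {M : Matrix (Fin m) (Fin m) ℝ} (h1 : M.IsHermitian)
    (h2 : ∀ x, 0 ≤ x ⬝ᵥ (M *ᵥ x)) : M.PosSemidef := .of_dotProduct_mulVec_nonneg h1 fun x => by simpa using h2 x

lemma conj_psd {n : ℕ} (W : Matrix (Fin n) (Fin n) ℝ) {d : Fin n → ℝ} (hd : ∀ i, 0 ≤ d i) :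
    (W * Matrix.diagonal d * Wᵀ).PosSemidef := by
  have := (Matrix.PosSemidef.diagonal (R := ℝ) (d := d) hd).mul_mul_conjTranspose_same W
  simpa [Matrix.conjTranspose_eq_transpose_of_trivial] using this

lemma quad_conj {n : ℕ} (U D : Matrix (Fin n) (Fin n) ℝ) (x : Fin n → ℝ) :
    x ⬝ᵥ ((U * D * Uᵀ) *ᵥ x) = (Uᵀ *ᵥ x) ⬝ᵥ (D *ᵥ (Uᵀ *ᵥ x)) := by
  rw [← Matrix.mulVec_mulVec, ← Matrix.mulVec_mulVec, Matrix.dotProduct_mulVec,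
    ← Matrix.mulVec_transpose, Matrix.mulVec_mulVec]

lemma diag_quad {n : ℕ} (d y : Fin n → ℝ) :
    y ⬝ᵥ (Matrix.diagonal d *ᵥ y) = ∑ i, d i * y i ^ 2 := by
  simp [dotProduct, Matrix.mulVec_diagonal]
  congr 1; funext i; ring


lemma dot_self_nonneg {m : ℕ} (w : Fin m → ℝ) : (0:ℝ) ≤ w ⬝ᵥ w :=
  Finset.sum_nonneg fun i _ => mul_self_nonneg _

lemma dot_mulVec_self {m : ℕ} (S : Matrix (Fin m) (Fin m) ℝ) (x : Fin m → ℝ) :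
    x ⬝ᵥ ((Sᵀ * S) *ᵥ x) = (S *ᵥ x) ⬝ᵥ (S *ᵥ x) := by
  rw [← Matrix.mulVec_mulVec, Matrix.dotProduct_mulVec x, Matrix.vecMul_transpose]


lemma eigsDesc_def {m : ℕ} {M : Matrix (Fin m) (Fin m) ℝ} (hM : M.IsHermitian) (i : Fin m) :
    eigsDesc hM i = hM.eigenvalues (Tuple.sort hM.eigenvalues i.rev) := rfl

lemma exists_eigsDesc_eq {m : ℕ} {M : Matrix (Fin m) (Fin m) ℝ} (hM : M.IsHermitian) (j : Fin m) :
    ∃ i, eigsDesc hM i = hM.eigenvalues j :=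
  ⟨((Tuple.sort hM.eigenvalues).symm j).rev, by
    rw [eigsDesc_def, Fin.rev_rev]; simp⟩


lemma opNorm_nonneg {m l : ℕ} (M : Matrix (Fin m) (Fin l) ℝ) : 0 ≤ opNorm M := by
  rcases Nat.eq_zero_or_pos l with hl | hl
  · subst hl; rw [opNorm, Real.iSup_of_isEmpty]
  · have : Nonempty (Fin l) := ⟨⟨0, hl⟩⟩
    rw [opNorm]
    exact le_trans (by unfold svDesc; exact Real.sqrt_nonneg _ : 0 ≤ svDesc M ⟨0, hl⟩)
      (le_ciSup (f := svDesc M) (Set.Finite.bddAbove (Set.finite_range _)) (⟨0, hl⟩ : Fin l))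

lemma sv_le_opNorm {m l : ℕ} (M : Matrix (Fin m) (Fin l) ℝ) (i : Fin l) :
    svDesc M i ≤ opNorm M :=
  le_ciSup (f := svDesc M) (Set.Finite.bddAbove (Set.finite_range _)) i

lemma mulVec_sq_le {m : ℕ} (S : Matrix (Fin m) (Fin m) ℝ) (x : Fin m → ℝ) :
    (S *ᵥ x) ⬝ᵥ (S *ᵥ x) ≤ opNorm S ^ 2 * (x ⬝ᵥ x) := by
  have hP := Matrix.isHermitian_conjTranspose_mul_self S
  have hCT : Sᴴ = Sᵀ := Matrix.conjTranspose_eq_transpose_of_trivial S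
  set V : Matrix (Fin m) (Fin m) ℝ := (hP.eigenvectorUnitary : Matrix (Fin m) (Fin m) ℝ) with hV
  have hVV : V * Vᵀ = 1 := by
    have h := (Matrix.mem_unitaryGroup_iff).mp hP.eigenvectorUnitary.2
    rwa [← Matrix.conjTranspose_eq_transpose_of_trivial]
  have hspec : Sᴴ * S = V * Matrix.diagonal hP.eigenvalues * Vᵀ := by
    have h := hP.spectral_theorem
    simp only [Matrix.conjTranspose_eq_transpose_of_trivial] at h
    refine hP.spectral_theorem.trans ?_
    rw [Unitary.conjStarAlgAut_apply, Matrix.star_eq_conjTranspose,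
      Matrix.conjTranspose_eq_transpose_of_trivial (hP.eigenvectorUnitary : Matrix (Fin m) (Fin m) ℝ)]
    rfl
  have key : (S *ᵥ x) ⬝ᵥ (S *ᵥ x) = x ⬝ᵥ ((Sᴴ * S) *ᵥ x) := by
    rw [hCT, dot_mulVec_self]
  rw [key, hspec, quad_conj, diag_quad]
  set y := Vᵀ *ᵥ x with hy
  have hyy : y ⬝ᵥ y = x ⬝ᵥ x := by
    rw [hy, ← dot_mulVec_self, Matrix.transpose_transpose, hVV, Matrix.one_mulVec]
  have hbound : ∀ j, hP.eigenvalues j ≤ opNorm S ^ 2 := by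
    intro j
    obtain ⟨i, hi⟩ := exists_eigsDesc_eq hP j
    have hnn : 0 ≤ hP.eigenvalues j :=
      (Matrix.posSemidef_conjTranspose_mul_self S).eigenvalues_nonneg j
    have hsv : svDesc S i = Real.sqrt (hP.eigenvalues j) := by rw [svDesc, hi]
    have h1 : Real.sqrt (hP.eigenvalues j) ≤ opNorm S := hsv ▸ sv_le_opNorm S i
    calc hP.eigenvalues j = Real.sqrt (hP.eigenvalues j) ^ 2 := (Real.sq_sqrt hnn).symm
      _ ≤ opNorm S ^ 2 := pow_le_pow_left₀ (Real.sqrt_nonneg _) h1 2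
  calc ∑ i, hP.eigenvalues i * y i ^ 2 ≤ ∑ i, opNorm S ^ 2 * y i ^ 2 :=
        Finset.sum_le_sum fun i _ => mul_le_mul_of_nonneg_right (hbound i) (sq_nonneg _)
    _ = opNorm S ^ 2 * (y ⬝ᵥ y) := by
        simp only [dotProduct, Finset.mul_sum]
        exact Finset.sum_congr rfl fun i _ => by ring
    _ = opNorm S ^ 2 * (x ⬝ᵥ x) := by rw [hyy]

lemma quad_le_opNorm {m : ℕ} (S : Matrix (Fin m) (Fin m) ℝ) (x : Fin m → ℝ) :
    |x ⬝ᵥ (S *ᵥ x)| ≤ opNorm S * (x ⬝ᵥ x) := by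
  set w := S *ᵥ x with hw
  have hCS : (x ⬝ᵥ w) ^ 2 ≤ (x ⬝ᵥ x) * (w ⬝ᵥ w) := by
    simpa [dotProduct, pow_two, Finset.mul_sum] using
      Finset.sum_mul_sq_le_sq_mul_sq Finset.univ x w
  have h2 := mulVec_sq_le S x
  have hN := opNorm_nonneg S
  have hxx := dot_self_nonneg x
  have hsq : (x ⬝ᵥ w) ^ 2 ≤ (opNorm S * (x ⬝ᵥ x)) ^ 2 := by nlinarith [dot_self_nonneg w]
  refine le_of_pow_le_pow_left₀ (n := 2) two_ne_zero (mul_nonneg hN hxx) ?_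
  rw [sq_abs]
  exact hsq


lemma eigen_facts {m : ℕ} {P : Matrix (Fin m) (Fin m) ℝ} (hP : P.IsHermitian) (j : Fin m) :
    ∃ v : Fin m → ℝ, v ⬝ᵥ v = 1 ∧ P *ᵥ v = hP.eigenvalues j • v := by
  refine ⟨⇑(hP.eigenvectorBasis j), ?_, hP.mulVec_eigenvectorBasis j⟩
  have h1 : ‖hP.eigenvectorBasis j‖ = 1 := hP.eigenvectorBasis.orthonormal.1 j
  have h2 : @inner ℝ _ _ (hP.eigenvectorBasis j) (hP.eigenvectorBasis j) = (1:ℝ) := by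
    rw [real_inner_self_eq_norm_sq, h1]; norm_num
  rw [PiLp.inner_apply] at h2
  simpa [dotProduct, RCLike.inner_apply, pow_two] using h2


/-- Bridge B : upper bound on opNorm of a symmetric matrix from two-sided quadratic bounds. -/
lemma opNorm_le_of_bounds {m : ℕ} {S : Matrix (Fin m) (Fin m) ℝ} (hS : Sᵀ = S)
    {c : ℝ} (hc : 0 ≤ c) (hub : ∀ x, x ⬝ᵥ (S *ᵥ x) ≤ c * (x ⬝ᵥ x))
    (hlb : ∀ x, -(c * (x ⬝ᵥ x)) ≤ x ⬝ᵥ (S *ᵥ x)) : opNorm S ≤ c := by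
  rcases Nat.eq_zero_or_pos m with hm | hm
  · subst hm
    rw [opNorm, Real.iSup_of_isEmpty]
    exact hc
  · have : Nonempty (Fin m) := ⟨⟨0, hm⟩⟩
    apply ciSup_le
    intro i
    have hCT : Sᴴ = Sᵀ := Matrix.conjTranspose_eq_transpose_of_trivial S
    have hP := Matrix.isHermitian_conjTranspose_mul_self S
    obtain ⟨v, hv1, hv2⟩ := eigen_facts hP (Tuple.sort hP.eigenvalues i.rev)
    set lam := hP.eigenvalues (Tuple.sort hP.eigenvalues i.rev) with hlam
    show Real.sqrt lam ≤ c
    set w := S *ᵥ v with hw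
    have key : v ⬝ᵥ ((Sᴴ * S) *ᵥ v) = w ⬝ᵥ w := by
      rw [hCT, hS, ← Matrix.mulVec_mulVec, Matrix.dotProduct_mulVec, ← Matrix.mulVec_transpose,
        hS, ← hw, dotProduct_comm]
    have hlw : lam = w ⬝ᵥ w := by
      rw [← key, hv2, dotProduct_smul, hv1, smul_eq_mul, mul_one]
    have hwnn : (0:ℝ) ≤ w ⬝ᵥ w := by
      have : ∀ i, 0 ≤ w i * w i := fun i => mul_self_nonneg _
      exact Finset.sum_nonneg fun i _ => this i
    have hlnn : 0 ≤ lam := hlw ▸ hwnn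
    set u := Real.sqrt lam with hu
    have hu2 : u ^ 2 = lam := Real.sq_sqrt hlnn
    have hSwv : w ⬝ᵥ (S *ᵥ v) = lam := by rw [← hw, ← hlw]
    have hSvw : v ⬝ᵥ (S *ᵥ w) = lam := by
      rw [Matrix.dotProduct_mulVec, ← Matrix.mulVec_transpose, hS, ← hw, dotProduct_comm,
        ← hlw]
    have e1 := hub (w + u • v)
    have e2 := hlb (w - u • v)
    have q1 : (w + u • v) ⬝ᵥ (S *ᵥ (w + u • v)) =
        w ⬝ᵥ (S *ᵥ w) + u * lam + u * lam + u^2 * (v ⬝ᵥ (S *ᵥ v)) := by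
      simp only [Matrix.mulVec_add, Matrix.mulVec_smul, dotProduct_add,
        add_dotProduct, dotProduct_smul, smul_dotProduct,
        smul_eq_mul, hSwv, hSvw]
      ring
    have q2 : (w - u • v) ⬝ᵥ (S *ᵥ (w - u • v)) =
        w ⬝ᵥ (S *ᵥ w) - u * lam - u * lam + u^2 * (v ⬝ᵥ (S *ᵥ v)) := by
      simp only [Matrix.mulVec_sub, Matrix.mulVec_smul, dotProduct_sub,
        sub_dotProduct, dotProduct_smul, smul_dotProduct,
        smul_eq_mul, hSwv, hSvw]
      ring
    have n1 : (w + u • v) ⬝ᵥ (w + u • v) = lam + u * (w ⬝ᵥ v) + u * (w ⬝ᵥ v) + u^2 := by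
      simp only [dotProduct_add, add_dotProduct, dotProduct_smul,
        smul_dotProduct, smul_eq_mul, hv1, ← hlw, dotProduct_comm v w]
      ring
    have n2 : (w - u • v) ⬝ᵥ (w - u • v) = lam - u * (w ⬝ᵥ v) - u * (w ⬝ᵥ v) + u^2 := by
      simp only [dotProduct_sub, sub_dotProduct, dotProduct_smul,
        smul_dotProduct, smul_eq_mul, hv1, ← hlw, dotProduct_comm v w]
      ring
    rw [q1, n1] at e1
    rw [q2, n2] at e2
    have h4 : u * lam ≤ c * lam := by nlinarith [hu2]
    rcases eq_or_lt_of_le hlnn with h0 | h0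
    · rw [hu, ← h0, Real.sqrt_zero]; exact hc
    · exact le_of_mul_le_mul_right (by linarith) h0

lemma antitone_pair {a b : ℝ} (h : b ≤ a) : Antitone ![a, b] := by
  intro i j hij
  fin_cases i <;> fin_cases j
  · exact le_rfl
  · exact h
  · exact absurd hij (by decide)
  · exact le_rfl

lemma comp_pair (g : ℝ → ℝ) (a b : ℝ) : g ∘ ![a, b] = ![g a, g b] := by
  funext i; fin_cases i <;> rfl

lemma diag2_decomp (a b : ℝ) : ∃ V γ, IsSpectralDecomp (Matrix.diagonal ![a, b]) V γ ∧
    ∀ g : ℝ → ℝ, V * Matrix.diagonal (g ∘ γ) * Vᵀ = Matrix.diagonal ![g a, g b] := by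
  rcases le_total b a with hba | hab
  · refine ⟨1, ![a, b], ⟨by simp, antitone_pair hba, by simp⟩, fun g => by
      rw [comp_pair]; simp⟩
  · refine ⟨!![(0:ℝ), 1; 1, 0], ![b, a], ⟨?_, antitone_pair hab, ?_⟩, fun g => ?_⟩
    · ext i j
      fin_cases i <;> fin_cases j <;>
        simp [Matrix.mul_apply, Fin.sum_univ_two, Matrix.one_apply, Matrix.vecHead, Matrix.vecTail]
    · ext i j
      fin_cases i <;> fin_cases j <;>
        simp [Matrix.mul_apply, Fin.sum_univ_two, Matrix.diagonal, Matrix.vecHead, Matrix.vecTail]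
    · rw [comp_pair]
      ext i j
      fin_cases i <;> fin_cases j <;>
        simp [Matrix.mul_apply, Fin.sum_univ_two, Matrix.diagonal, Matrix.vecHead, Matrix.vecTail]


end Aux

namespace Concave

lemma psd_entry {m : ℕ} {M : Matrix (Fin m) (Fin m) ℝ} (h : M.PosSemidef) (i : Fin m) :
    0 ≤ M i i := by
  have := h.dotProduct_mulVec_nonneg (Pi.single i 1)
  simpa [Matrix.mulVec_single, dotProduct, Pi.single_apply] using this

lemma conj_psd' {n : ℕ} (W : Matrix (Fin n) (Fin n) ℝ) {d : Fin n → ℝ} (hd : ∀ i, 0 ≤ d i) :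
    (W * Matrix.diagonal d * Wᵀ).PosSemidef := by
  have := (Matrix.PosSemidef.diagonal (d := d) hd).mul_mul_conjTranspose_same W
  simpa [Matrix.conjTranspose_eq_transpose_of_trivial] using this

lemma rot_conj (s s' p q : ℝ) :
    (!![s, -s'; s', s]) * Matrix.diagonal ![p, q] * (!![s, -s'; s', s])ᵀ =
      !![s*s*p + s'*s'*q, s*s'*(p-q); s*s'*(p-q), s'*s'*p + s*s*q] := by
  ext i j
  fin_cases i <;> fin_cases j <;>
    (simp [Matrix.mul_apply, Fin.sum_univ_two, Matrix.diagonal, Matrix.vecHead,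
      Matrix.vecTail]; ring)

lemma rot_orth {s s' : ℝ} (h : s*s + s'*s' = 1) :
    (!![s, -s'; s', s])ᵀ * !![s, -s'; s', s] = 1 := by
  ext i j
  fin_cases i <;> fin_cases j <;>
    simp [Matrix.mul_apply, Fin.sum_univ_two, Matrix.one_apply, Matrix.vecHead,
      Matrix.vecTail] <;> linarith [h]

lemma diag_sub2 (a b p q r : ℝ) :
    Matrix.diagonal ![a, b] - !![p, r; r, q] = !![a - p, -r; -r, b - q] := by
  ext i j
  fin_cases i <;> fin_cases j <;>
    simp [Matrix.diagonal, Matrix.vecHead, Matrix.vecTail]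

lemma psd2 {p r q : ℝ} (h : ∀ z0 z1 : ℝ, 0 ≤ p*z0^2 + 2*r*z0*z1 + q*z1^2) :
    (!![p, r; r, q]).PosSemidef := by
  refine Matrix.PosSemidef.of_dotProduct_mulVec_nonneg ?_ ?_
  · ext i j
    fin_cases i <;> fin_cases j <;>
      simp [Matrix.conjTranspose_apply, Matrix.vecHead, Matrix.vecTail]
  · intro z
    have hz : star z = z := by simp
    rw [hz]
    have hq : z ⬝ᵥ (!![p, r; r, q] *ᵥ z) = p*(z 0)^2 + 2*r*(z 0)*(z 1) + q*(z 1)^2 := by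
      simp [Matrix.mulVec, dotProduct, Fin.sum_univ_two, Matrix.vecHead, Matrix.vecTail]
      ring
    rw [hq]
    exact h _ _

lemma entry00 (a b c d : ℝ) : (!![a, b; c, d] : Matrix (Fin 2) (Fin 2) ℝ) 0 0 = a := by simp

lemma diag2_entry00 (a b : ℝ) : (Matrix.diagonal ![a, b]) 0 0 = a := by
  simp

lemma concave_step {f : ℝ → ℝ} (hf : OperatorMonotone f)
    {x y t δ : ℝ} (hy : 0 ≤ y) (hyx : y ≤ x) (ht0 : 0 ≤ t) (ht1 : t ≤ 1) (hδ : 0 < δ) :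
    t * f x + (1 - t) * f y ≤ f (t * x + (1 - t) * y + δ) := by
  have hx : 0 ≤ x := le_trans hy hyx
  obtain ⟨s, hs0, hss⟩ : ∃ s : ℝ, 0 ≤ s ∧ s * s = t :=
    ⟨Real.sqrt t, Real.sqrt_nonneg _, Real.mul_self_sqrt ht0⟩
  obtain ⟨s', hs'0, hss'⟩ : ∃ s' : ℝ, 0 ≤ s' ∧ s' * s' = 1 - t :=
    ⟨Real.sqrt (1-t), Real.sqrt_nonneg _, Real.mul_self_sqrt (by linarith)⟩
  set U : Matrix (Fin 2) (Fin 2) ℝ := !![s, -s'; s', s] with hU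
  set d : ℝ := s * s' * (x - y) with hd
  set m₁ : ℝ := t * x + (1 - t) * y with hm₁
  set m₂ : ℝ := (1 - t) * x + t * y with hm₂
  set b₂ : ℝ := m₂ + d ^ 2 / δ with hb₂
  have hUorth : Uᵀ * U = 1 := rot_orth (by linarith)
  have hM : U * Matrix.diagonal ![x, y] * Uᵀ = !![m₁, d; d, m₂] := by
    rw [hU, rot_conj, hss, hss', hm₁, hm₂, hd]
  obtain ⟨V, γ, hdecY, hgY⟩ := Aux.diag2_decomp (m₁ + δ) b₂
  have psdM : (U * Matrix.diagonal ![x, y] * Uᵀ).PosSemidef := by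
    refine conj_psd' U fun i => ?_
    fin_cases i
    · exact hx
    · exact hy
  have hm₁nn : 0 ≤ m₁ := by nlinarith
  have hm₂nn : 0 ≤ m₂ := by nlinarith
  have psdY : (Matrix.diagonal ![m₁ + δ, b₂]).PosSemidef := by
    refine Matrix.PosSemidef.diagonal fun i => ?_
    fin_cases i
    · show (0:ℝ) ≤ m₁ + δ; positivity
    · show (0:ℝ) ≤ b₂; rw [hb₂]; positivity
  have psdDiff : (Matrix.diagonal ![m₁ + δ, b₂] - U * Matrix.diagonal ![x, y] * Uᵀ).PosSemidef := by
    rw [hM, diag_sub2]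
    have e1 : m₁ + δ - m₁ = δ := by ring
    have e2 : b₂ - m₂ = d ^ 2 / δ := by rw [hb₂]; ring
    rw [e1, e2]
    refine psd2 fun z0 z1 => ?_
    have key : δ*z0^2 + 2*(-d)*z0*z1 + (d^2/δ)*z1^2 = (δ * z0 - d * z1)^2/δ := by
      field_simp
      ring
    rw [key]
    positivity
  have happ := hf 2 (Matrix.diagonal ![m₁ + δ, b₂]) (U * Matrix.diagonal ![x, y] * Uᵀ) V U γ
    ![x, y] hdecY ⟨hUorth, Aux.antitone_pair hyx, rfl⟩ psdY psdM psdDiff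
  rw [hgY f, Aux.comp_pair f x y, hU, rot_conj, hss, hss'] at happ
  have hentry := psd_entry happ 0
  rw [Matrix.sub_apply, diag2_entry00, entry00] at hentry
  linarith



lemma le_of_right_lim {f : ℝ → ℝ} (hfc : ContinuousOn f (Set.Ici 0)) {a c : ℝ} (ha : 0 ≤ a)
    (h : ∀ δ : ℝ, 0 < δ → c ≤ f (a + δ)) : c ≤ f a := by
  have h1 : Filter.Tendsto (fun δ : ℝ => a + δ) (nhdsWithin 0 (Set.Ioi 0))
      (nhdsWithin a (Set.Ici 0)) := by
    apply tendsto_nhdsWithin_of_tendsto_nhds_of_eventually_within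
    · have : Filter.Tendsto (fun δ : ℝ => a + δ) (nhds 0) (nhds (a + 0)) :=
        (continuous_const.add continuous_id).tendsto 0
      rw [add_zero] at this
      exact this.mono_left nhdsWithin_le_nhds
    · filter_upwards [self_mem_nhdsWithin] with δ hδ
      have hδ' : (0:ℝ) < δ := hδ
      simp only [Set.mem_Ici]
      linarith
  have ht : Filter.Tendsto (fun δ : ℝ => f (a + δ)) (nhdsWithin 0 (Set.Ioi 0)) (nhds (f a)) :=
    (hfc a ha).tendsto.comp h1
  refine ge_of_tendsto ht ?_
  filter_upwards [self_mem_nhdsWithin] with δ hδ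
  exact h δ hδ

lemma f_concave {f : ℝ → ℝ} (hf : OperatorMonotone f) (hfc : ContinuousOn f (Set.Ici 0)) :
    ∀ x y t : ℝ, 0 ≤ x → 0 ≤ y → 0 ≤ t → t ≤ 1 →
      t * f x + (1 - t) * f y ≤ f (t * x + (1 - t) * y) := by
  have main : ∀ x y t : ℝ, 0 ≤ y → y ≤ x → 0 ≤ t → t ≤ 1 →
      t * f x + (1 - t) * f y ≤ f (t * x + (1 - t) * y) := by
    intro x y t hy hyx ht0 ht1
    refine le_of_right_lim hfc (by nlinarith [le_trans hy hyx]) fun δ hδ => ?_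
    exact concave_step hf hy hyx ht0 ht1 hδ
  intro x y t hx hy ht0 ht1
  rcases le_total y x with h | h
  · exact main x y t hy h ht0 ht1
  · have h2 := main y x (1 - t) hx h (by linarith) (by linarith)
    have e : (1 - t) * y + (1 - (1 - t)) * x = t * x + (1 - t) * y := by ring
    rw [e] at h2
    linarith

lemma f_subadd {f : ℝ → ℝ} (hf : OperatorMonotone f) (hfc : ContinuousOn f (Set.Ici 0))
    (hfnn : ∀ x : ℝ, 0 ≤ x → 0 ≤ f x) {a b : ℝ} (ha : 0 ≤ a) (hb : 0 ≤ b) :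
    f (a + b) ≤ f a + f b := by
  rcases eq_or_lt_of_le (by linarith : (0:ℝ) ≤ a + b) with h0 | h0
  · have haz : a = 0 := by linarith
    have hbz : b = 0 := by linarith
    rw [haz, hbz]
    have := hfnn 0 le_rfl
    simpa using by linarith
  · set t := a / (a + b) with htdef
    have ht0 : 0 ≤ t := div_nonneg ha (by linarith)
    have ht1 : t ≤ 1 := by
      rw [htdef, div_le_one h0]; linarith
    have h1 := f_concave hf hfc (a + b) 0 t (by linarith) le_rfl ht0 ht1
    have h2 := f_concave hf hfc (a + b) 0 (1 - t) (by linarith) le_rfl (by linarith) (by linarith)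
    have e1 : t * (a + b) + (1 - t) * 0 = a := by
      simp only [mul_zero, add_zero, htdef]
      exact div_mul_cancel₀ a (ne_of_gt h0)
    have e2 : (1 - t) * (a + b) + (1 - (1 - t)) * 0 = b := by
      simp only [mul_zero, add_zero, htdef]
      rw [sub_mul, one_mul, div_mul_cancel₀ a (ne_of_gt h0)]
      ring
    rw [e1] at h1
    rw [e2] at h2
    have hf0 := hfnn 0 le_rfl
    nlinarith


lemma f_scale {f : ℝ → ℝ} (hf : OperatorMonotone f) (hfc : ContinuousOn f (Set.Ici 0))
    (hfnn : ∀ x : ℝ, 0 ≤ x → 0 ≤ f x) {c a : ℝ} (hc : 1 ≤ c) (ha : 0 ≤ a) :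
    f (c * a) ≤ c * f a := by
  have hc0 : 0 < c := by linarith
  have h1 := f_concave hf hfc (c * a) 0 (1 / c) (by positivity) le_rfl (by positivity)
    (by rw [div_le_one hc0]; linarith)
  have e1 : 1 / c * (c * a) + (1 - 1 / c) * 0 = a := by
    field_simp
    ring
  rw [e1] at h1
  have hf0 := hfnn 0 le_rfl
  have h1c : 1 / c ≤ 1 := by rw [div_le_one hc0]; linarith
  have h2 : 1 / c * f (c * a) ≤ f a := by
    nlinarith [mul_nonneg (by linarith : (0:ℝ) ≤ 1 - 1 / c) hf0]
  calc f (c * a) = c * (1 / c * f (c * a)) := by field_simp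
    _ ≤ c * f a := by nlinarith


end Concave

namespace Aux2

lemma conj_sub {n : ℕ} (W : Matrix (Fin n) (Fin n) ℝ) (a b : Fin n → ℝ) :
    W * Matrix.diagonal a * Wᵀ - W * Matrix.diagonal b * Wᵀ =
      W * Matrix.diagonal (fun i => a i - b i) * Wᵀ := by
  rw [← Matrix.diagonal_sub, Matrix.mul_sub, Matrix.sub_mul]

lemma conj_add {n : ℕ} (W : Matrix (Fin n) (Fin n) ℝ) (a b : Fin n → ℝ) :
    W * Matrix.diagonal a * Wᵀ + W * Matrix.diagonal b * Wᵀ =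
      W * Matrix.diagonal (fun i => a i + b i) * Wᵀ := by
  rw [← Matrix.diagonal_add, Matrix.mul_add, Matrix.add_mul]

lemma conj_smul_one {n : ℕ} {W : Matrix (Fin n) (Fin n) ℝ} (hW : W * Wᵀ = 1) (c : ℝ) :
    W * Matrix.diagonal (fun _ : Fin n => c) * Wᵀ = c • 1 := by
  have h1 : Matrix.diagonal (fun _ : Fin n => c) = c • (1 : Matrix (Fin n) (Fin n) ℝ) := by
    ext i j
    by_cases h : i = j <;>
      simp [Matrix.diagonal_apply, h, Matrix.one_apply, Matrix.smul_apply]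
  rw [h1, Matrix.mul_smul, Matrix.smul_mul, Matrix.mul_one, hW]

lemma conj_symm {n : ℕ} (W : Matrix (Fin n) (Fin n) ℝ) (d : Fin n → ℝ) :
    (W * Matrix.diagonal d * Wᵀ)ᵀ = W * Matrix.diagonal d * Wᵀ := by
  rw [Matrix.transpose_mul, Matrix.transpose_mul, Matrix.transpose_transpose,
    Matrix.diagonal_transpose, Matrix.mul_assoc]

lemma beta_eventually_zero {n : ℕ} {W : Matrix (Fin n) (Fin n) ℝ} {β : Fin n → ℝ}
    (hW : Wᵀ * W = 1) (hmono : Antitone β) (hnn : ∀ i, 0 ≤ β i) {r : ℕ}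
    (hr : r = (W * Matrix.diagonal β * Wᵀ).rank) : ∀ i : Fin n, r ≤ (i : ℕ) → β i = 0 := by
  have hdet : IsUnit W.det := by
    have h := congrArg Matrix.det hW
    rw [Matrix.det_mul, Matrix.det_transpose, Matrix.det_one] at h
    exact IsUnit.of_mul_eq_one _ h
  have hdetT : IsUnit Wᵀ.det := by rwa [Matrix.det_transpose]
  have hrank : (W * Matrix.diagonal β * Wᵀ).rank = (Matrix.diagonal β).rank := by
    rw [Matrix.rank_mul_eq_left_of_isUnit_det Wᵀ _ hdetT,
      Matrix.rank_mul_eq_right_of_isUnit_det W _ hdet]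
  have hcard : r = Fintype.card {i // β i ≠ 0} := by
    rw [hr, hrank, Matrix.rank_diagonal]
  intro i hi
  by_contra hne
  have hpos : 0 < β i := lt_of_le_of_ne (hnn i) (Ne.symm hne)
  have hsub : ∀ j : Fin n, j ≤ i → β j ≠ 0 := fun j hj =>
    ne_of_gt (lt_of_lt_of_le hpos (hmono hj))
  have hcard2 : (i : ℕ) + 1 ≤ Fintype.card {j // β j ≠ 0} := by
    rw [Fintype.card_subtype]
    calc (i : ℕ) + 1 = (Finset.Iic i).card := (Fin.card_Iic i).symm
      _ ≤ _ := Finset.card_le_card fun j hj => by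
          simp only [Finset.mem_filter, Finset.mem_univ, true_and]
          exact hsub j (Finset.mem_Iic.mp hj)
  omega


lemma dot_eq_sum_sq {m : ℕ} (y : Fin m → ℝ) : y ⬝ᵥ y = ∑ i, y i ^ 2 := by
  simp only [dotProduct]
  exact Finset.sum_congr rfl fun i _ => by ring

lemma iso_dot {n : ℕ} {U : Matrix (Fin n) (Fin n) ℝ} (hUU : U * Uᵀ = 1) (x : Fin n → ℝ) :
    (Uᵀ *ᵥ x) ⬝ᵥ (Uᵀ *ᵥ x) = x ⬝ᵥ x := by
  rw [← Aux.dot_mulVec_self, Matrix.transpose_transpose, hUU, Matrix.one_mulVec]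

lemma opNorm_conj_le {n : ℕ} {U : Matrix (Fin n) (Fin n) ℝ} (hUU : U * Uᵀ = 1)
    {d : Fin n → ℝ} {c : ℝ} (hd : ∀ i, |d i| ≤ c) (hc : 0 ≤ c) :
    opNorm (U * Matrix.diagonal d * Uᵀ) ≤ c := by
  refine Aux.opNorm_le_of_bounds (conj_symm U d) hc (fun x => ?_) (fun x => ?_) <;>
    rw [Aux.quad_conj, Aux.diag_quad]
  · calc ∑ i, d i * (Uᵀ *ᵥ x) i ^ 2 ≤ ∑ i, c * (Uᵀ *ᵥ x) i ^ 2 :=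
          Finset.sum_le_sum fun i _ =>
            mul_le_mul_of_nonneg_right (le_of_abs_le (hd i)) (sq_nonneg _)
      _ = c * ((Uᵀ *ᵥ x) ⬝ᵥ (Uᵀ *ᵥ x)) := by rw [dot_eq_sum_sq, Finset.mul_sum]
      _ = c * (x ⬝ᵥ x) := by rw [iso_dot hUU]
  · have he : -(c * (x ⬝ᵥ x)) = ∑ i, (-c) * (Uᵀ *ᵥ x) i ^ 2 := by
      rw [← iso_dot hUU x, dot_eq_sum_sq, ← Finset.mul_sum]
      ring
    rw [he]
    refine Finset.sum_le_sum fun i _ => mul_le_mul_of_nonneg_right ?_ (sq_nonneg _)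
    have := neg_abs_le (d i)
    have h2 := hd i
    linarith

lemma eig_nonneg_of_psd {n : ℕ} {U : Matrix (Fin n) (Fin n) ℝ} {d : Fin n → ℝ}
    (hU : Uᵀ * U = 1) (h : (U * Matrix.diagonal d * Uᵀ).PosSemidef) (i : Fin n) : 0 ≤ d i := by
  have hq := Aux.psd_quad h (U *ᵥ Pi.single i 1)
  rw [Aux.quad_conj, Matrix.mulVec_mulVec, hU, Matrix.one_mulVec, Aux.diag_quad] at hq
  simpa [Pi.single_apply] using hq

lemma col_quad {n : ℕ} {U : Matrix (Fin n) (Fin n) ℝ} (hU : Uᵀ * U = 1) (d : Fin n → ℝ)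
    (k : Fin n) :
    (U *ᵥ Pi.single k 1) ⬝ᵥ ((U * Matrix.diagonal d * Uᵀ) *ᵥ (U *ᵥ Pi.single k 1)) = d k := by
  rw [Aux.quad_conj, Matrix.mulVec_mulVec, hU, Matrix.one_mulVec, Aux.diag_quad]
  simp [Pi.single_apply]

lemma col_norm {n : ℕ} {U : Matrix (Fin n) (Fin n) ℝ} (hU : Uᵀ * U = 1) (k : Fin n) :
    (U *ᵥ Pi.single k 1) ⬝ᵥ (U *ᵥ Pi.single k 1) = 1 := by
  rw [← Aux.dot_mulVec_self, hU, Matrix.one_mulVec]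
  simp [dotProduct, Pi.single_apply]

end Aux2

/-- Operator-norm transfer theorem: if `A, B ⪰ 0` and
`‖A − B‖₂ ≤ (1+ε)‖A − A_(k)‖₂`, then with `r = rank B`, for every continuous operator
monotone `f : [0,∞) → [0,∞)`, `‖f(A) − f(B)_(r)‖₂ ≤ (1+ε)‖f(A) − f(A)_(k)‖₂`. -/
theorem opNorm_nystrom_to_funNystrom
    (n k : ℕ) (hk : 1 ≤ k) (hkn : k < n) (ε : ℝ) (hε : 0 ≤ ε)
    (A B U W : Matrix (Fin n) (Fin n) ℝ) (μ β : Fin n → ℝ)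
    (hA : A.PosSemidef) (hB : B.PosSemidef)
    (hdecA : IsSpectralDecomp A U μ) (hdecB : IsSpectralDecomp B W β)
    (hnear : opNorm (A - B) ≤ (1 + ε) * opNorm (A - trunc k U μ))
    (r : ℕ) (hr : r = B.rank)
    (f : ℝ → ℝ) (hfc : ContinuousOn f (Set.Ici 0)) (hfmono : OperatorMonotone f)
    (hfnn : ∀ x : ℝ, 0 ≤ x → 0 ≤ f x) :
    opNorm (U * Matrix.diagonal (f ∘ μ) * Uᵀ - trunc r W (f ∘ β)) ≤
      (1 + ε) * opNorm (U * Matrix.diagonal (f ∘ μ) * Uᵀ - trunc k U (f ∘ μ)) := by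
  classical
  obtain ⟨hUo, hμa, hAeq⟩ := hdecA
  obtain ⟨hWo, hβa, hBeq⟩ := hdecB
  have hUo' : U * Uᵀ = 1 := mul_eq_one_comm.mp hUo
  have hWo' : W * Wᵀ = 1 := mul_eq_one_comm.mp hWo
  have hApsd' : (U * Matrix.diagonal μ * Uᵀ).PosSemidef := hAeq ▸ hA
  have hBpsd' : (W * Matrix.diagonal β * Wᵀ).PosSemidef := hBeq ▸ hB
  have hμnn : ∀ i, 0 ≤ μ i := Aux2.eig_nonneg_of_psd hUo hApsd'
  have hβnn : ∀ i, 0 ≤ β i := Aux2.eig_nonneg_of_psd hWo hBpsd'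
  have hβ0 : ∀ i : Fin n, r ≤ (i : ℕ) → β i = 0 :=
    Aux2.beta_eventually_zero hWo hβa hβnn (by rw [hr, hBeq])
  set kk : Fin n := ⟨k, hkn⟩ with hkk
  have hμknn : 0 ≤ μ kk := hμnn kk
  have hεnn : (0:ℝ) ≤ 1 + ε := by linarith
  set σ : ℝ := (1 + ε) * μ kk with hσdef
  have hσnn : 0 ≤ σ := mul_nonneg hεnn hμknn
  -- Step B : opNorm (A - A_(k)) ≤ μ kk
  have hop1 : opNorm (A - trunc k U μ) ≤ μ kk := by
    have he : A - trunc k U μ =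
        U * Matrix.diagonal (fun i => μ i - if (i : ℕ) < k then μ i else 0) * Uᵀ := by
      rw [hAeq, trunc, Aux2.conj_sub]
    rw [he]
    refine Aux2.opNorm_conj_le hUo' (fun i => ?_) hμknn
    by_cases hik : (i : ℕ) < k
    · rw [if_pos hik, sub_self, abs_zero]
      exact hμknn
    · rw [if_neg hik, sub_zero, abs_of_nonneg (hμnn i)]
      exact hμa (by simpa [hkk, Fin.le_def] using not_lt.mp hik)
  -- Step C : quadratic form bound on A - B
  have hABq : ∀ x : Fin n → ℝ, |x ⬝ᵥ ((A - B) *ᵥ x)| ≤ σ * (x ⬝ᵥ x) := by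
    intro x
    have h1 := Aux.quad_le_opNorm (A - B) x
    have h2 : opNorm (A - B) ≤ σ := le_trans hnear (by
      rw [hσdef]
      exact mul_le_mul_of_nonneg_left hop1 hεnn)
    have hxx := Aux.dot_self_nonneg x
    calc |x ⬝ᵥ ((A - B) *ᵥ x)| ≤ opNorm (A - B) * (x ⬝ᵥ x) := h1
      _ ≤ σ * (x ⬝ᵥ x) := mul_le_mul_of_nonneg_right h2 hxx
  -- Step D : Loewner bounds
  have psd1 : (A + σ • 1 - B).PosSemidef := by
    refine Aux.psd_of_quad ?_ fun x => ?_
    · show (A + σ • 1 - B)ᴴ = A + σ • 1 - B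
      rw [Matrix.conjTranspose_sub, Matrix.conjTranspose_add, Matrix.conjTranspose_smul,
        hA.1, hB.1, Matrix.conjTranspose_one, star_trivial]
    · have habs := abs_le.mp (hABq x)
      have he : x ⬝ᵥ ((A + σ • 1 - B) *ᵥ x) = σ * (x ⬝ᵥ x) + x ⬝ᵥ ((A - B) *ᵥ x) := by
        simp only [Matrix.sub_mulVec, Matrix.add_mulVec, Matrix.smul_mulVec,
          Matrix.one_mulVec, dotProduct_sub, dotProduct_add,
          dotProduct_smul, smul_eq_mul]
        ring
      rw [he]
      linarith [habs.1]
  have psd2 : (B + σ • 1 - A).PosSemidef := by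
    refine Aux.psd_of_quad ?_ fun x => ?_
    · show (B + σ • 1 - A)ᴴ = B + σ • 1 - A
      rw [Matrix.conjTranspose_sub, Matrix.conjTranspose_add, Matrix.conjTranspose_smul,
        hA.1, hB.1, Matrix.conjTranspose_one, star_trivial]
    · have habs := abs_le.mp (hABq x)
      have he : x ⬝ᵥ ((B + σ • 1 - A) *ᵥ x) = σ * (x ⬝ᵥ x) - x ⬝ᵥ ((A - B) *ᵥ x) := by
        simp only [Matrix.sub_mulVec, Matrix.add_mulVec, Matrix.smul_mulVec,
          Matrix.one_mulVec, dotProduct_sub, dotProduct_add,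
          dotProduct_smul, smul_eq_mul]
        ring
      rw [he]
      linarith [habs.2]
  -- Step E : shifted spectral decompositions
  have heqAσ : A + σ • 1 = U * Matrix.diagonal (fun i => μ i + σ) * Uᵀ := by
    rw [← Aux2.conj_add, Aux2.conj_smul_one hUo', ← hAeq]
  have heqBσ : B + σ • 1 = W * Matrix.diagonal (fun i => β i + σ) * Wᵀ := by
    rw [← Aux2.conj_add, Aux2.conj_smul_one hWo', ← hBeq]
  have decAσ : IsSpectralDecomp (A + σ • 1) U (fun i => μ i + σ) :=
    ⟨hUo, fun a b hab => by simpa using hμa hab, heqAσ⟩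
  have decBσ : IsSpectralDecomp (B + σ • 1) W (fun i => β i + σ) :=
    ⟨hWo, fun a b hab => by simpa using hβa hab, heqBσ⟩
  have psdAσ : (A + σ • 1).PosSemidef := by
    rw [heqAσ]
    exact Aux.conj_psd U fun i => add_nonneg (hμnn i) hσnn
  have psdBσ : (B + σ • 1).PosSemidef := by
    rw [heqBσ]
    exact Aux.conj_psd W fun i => add_nonneg (hβnn i) hσnn
  -- Step F : operator monotonicity applications
  have happ1 := hfmono n (A + σ • 1) B U W (fun i => μ i + σ) β decAσ ⟨hWo, hβa, hBeq⟩ psdAσ hB psd1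
  have happ2 := hfmono n (B + σ • 1) A W U (fun i => β i + σ) μ decBσ ⟨hUo, hμa, hAeq⟩ psdBσ hA psd2
  -- scalar consequences of operator monotonicity
  have hsub : ∀ a b : ℝ, 0 ≤ a → 0 ≤ b → f (a + b) ≤ f a + f b := fun a b ha hb =>
    Concave.f_subadd hfmono hfc hfnn ha hb
  -- notation
  set hfun : Fin n → ℝ := fun i => if (i : ℕ) < r then f (β i) else 0 with hhfun
  have htr : trunc r W (f ∘ β) = W * Matrix.diagonal hfun * Wᵀ := rfl
  set FA : Matrix (Fin n) (Fin n) ℝ := U * Matrix.diagonal (f ∘ μ) * Uᵀ with hFA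
  set FBr : Matrix (Fin n) (Fin n) ℝ := W * Matrix.diagonal hfun * Wᵀ with hFBr
  -- Step G : the two PSD goals
  have up : (f σ • (1 : Matrix (Fin n) (Fin n) ℝ) - (FA - FBr)).PosSemidef := by
    have hXnn : ∀ i, 0 ≤ f σ - f (β i + σ) + hfun i := by
      intro i
      by_cases hir : (i : ℕ) < r
      · have := hsub (β i) σ (hβnn i) hσnn
        rw [hhfun]
        simp only [if_pos hir]
        linarith
      · rw [hhfun]
        simp only [if_neg hir]
        rw [hβ0 i (not_lt.mp hir), zero_add]
        simp
    have hXY : W * Matrix.diagonal (fun i => f σ - f (β i + σ) + hfun i) * Wᵀ +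
        W * Matrix.diagonal (f ∘ fun i => β i + σ) * Wᵀ =
        f σ • (1 : Matrix (Fin n) (Fin n) ℝ) + FBr := by
      rw [Aux2.conj_add]
      have he : (fun i => f σ - f (β i + σ) + hfun i + (f ∘ fun i => β i + σ) i) =
          fun i : Fin n => f σ + hfun i := by
        funext i
        simp only [Function.comp_apply]
        ring
      rw [he, ← Aux2.conj_add, Aux2.conj_smul_one hWo', hFBr]
    have e : f σ • (1 : Matrix (Fin n) (Fin n) ℝ) - (FA - FBr) =
        W * Matrix.diagonal (fun i => f σ - f (β i + σ) + hfun i) * Wᵀ +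
          (W * Matrix.diagonal (f ∘ fun i => β i + σ) * Wᵀ - FA) := by
      calc f σ • (1 : Matrix (Fin n) (Fin n) ℝ) - (FA - FBr)
          = (f σ • (1 : Matrix (Fin n) (Fin n) ℝ) + FBr) - FA := by abel
        _ = _ := by rw [← hXY]; abel
    rw [e]
    exact (Aux.conj_psd W hXnn).add happ2
  have down : (f σ • (1 : Matrix (Fin n) (Fin n) ℝ) + (FA - FBr)).PosSemidef := by
    have hX1nn : ∀ i, 0 ≤ f σ + f (μ i) - f (μ i + σ) := by
      intro i
      have := hsub (μ i) σ (hμnn i) hσnn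
      linarith
    have hX3nn : ∀ i, 0 ≤ f (β i) - hfun i := by
      intro i
      by_cases hir : (i : ℕ) < r
      · rw [hhfun]; simp only [if_pos hir, sub_self, le_refl]
      · rw [hhfun]; simp only [if_neg hir, sub_zero]
        exact hfnn _ (hβnn i)
    have h12 : W * Matrix.diagonal (fun i => f (β i) - hfun i) * Wᵀ =
        W * Matrix.diagonal (f ∘ β) * Wᵀ - FBr := by
      rw [← Aux2.conj_sub, hFBr]
      rfl
    have h13 : U * Matrix.diagonal (fun i => f σ + f (μ i) - f (μ i + σ)) * Uᵀ +
        U * Matrix.diagonal (f ∘ fun i => μ i + σ) * Uᵀ =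
        f σ • (1 : Matrix (Fin n) (Fin n) ℝ) + FA := by
      rw [Aux2.conj_add]
      have he : (fun i => f σ + f (μ i) - f (μ i + σ) + (f ∘ fun i => μ i + σ) i) =
          fun i : Fin n => f σ + (f ∘ μ) i := by
        funext i
        simp only [Function.comp_apply]
        ring
      rw [he, ← Aux2.conj_add, Aux2.conj_smul_one hUo', hFA]
    have e : f σ • (1 : Matrix (Fin n) (Fin n) ℝ) + (FA - FBr) =
        U * Matrix.diagonal (fun i => f σ + f (μ i) - f (μ i + σ)) * Uᵀ +
          (U * Matrix.diagonal (f ∘ fun i => μ i + σ) * Uᵀ -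
            W * Matrix.diagonal (f ∘ β) * Wᵀ) +
          W * Matrix.diagonal (fun i => f (β i) - hfun i) * Wᵀ := by
      rw [h12]
      calc f σ • (1 : Matrix (Fin n) (Fin n) ℝ) + (FA - FBr)
          = (f σ • (1 : Matrix (Fin n) (Fin n) ℝ) + FA) +
              (W * Matrix.diagonal (f ∘ β) * Wᵀ - FBr) -
              W * Matrix.diagonal (f ∘ β) * Wᵀ := by abel
        _ = _ := by rw [← h13]; abel
    rw [e]
    exact ((Aux.conj_psd U hX1nn).add happ1).add (Aux.conj_psd W hX3nn)
  -- Step H : opNorm (f(A) - f(B)_(r)) ≤ f σ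
  have hfσnn : 0 ≤ f σ := hfnn σ hσnn
  have hopT : opNorm (FA - FBr) ≤ f σ := by
    refine Aux.opNorm_le_of_bounds ?_ hfσnn (fun x => ?_) (fun x => ?_)
    · rw [Matrix.transpose_sub, hFA, hFBr, Aux2.conj_symm, Aux2.conj_symm]
    · have hq := Aux.psd_quad up x
      have he : x ⬝ᵥ ((f σ • (1 : Matrix (Fin n) (Fin n) ℝ) - (FA - FBr)) *ᵥ x) =
          f σ * (x ⬝ᵥ x) - x ⬝ᵥ ((FA - FBr) *ᵥ x) := by
        simp only [Matrix.sub_mulVec, Matrix.smul_mulVec, Matrix.one_mulVec,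
          dotProduct_sub, dotProduct_smul, smul_eq_mul]
        try ring
      rw [he] at hq
      linarith
    · have hq := Aux.psd_quad down x
      have he : x ⬝ᵥ ((f σ • (1 : Matrix (Fin n) (Fin n) ℝ) + (FA - FBr)) *ᵥ x) =
          f σ * (x ⬝ᵥ x) + x ⬝ᵥ ((FA - FBr) *ᵥ x) := by
        simp only [Matrix.add_mulVec, Matrix.sub_mulVec, Matrix.smul_mulVec,
          Matrix.one_mulVec, dotProduct_add, dotProduct_sub,
          dotProduct_smul, smul_eq_mul]
        try ring
      rw [he] at hq
      linarith
  -- Step I : f σ ≤ (1+ε) f (μ kk)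
  have hscale : f σ ≤ (1 + ε) * f (μ kk) := by
    rw [hσdef]
    exact Concave.f_scale hfmono hfc hfnn (by linarith) hμknn
  -- Step J : f (μ kk) ≤ opNorm (f(A) - f(A)_(k))
  have hrhs : f (μ kk) ≤ opNorm (FA - trunc k U (f ∘ μ)) := by
    have he : FA - trunc k U (f ∘ μ) =
        U * Matrix.diagonal (fun i => (f ∘ μ) i - if (i : ℕ) < k then (f ∘ μ) i else 0) * Uᵀ := by
      rw [hFA, trunc, Aux2.conj_sub]
    have h1 := Aux.quad_le_opNorm (FA - trunc k U (f ∘ μ)) (U *ᵥ Pi.single kk 1)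
    rw [Aux2.col_norm hUo kk, mul_one] at h1
    have h2 : (U *ᵥ Pi.single kk 1) ⬝ᵥ ((FA - trunc k U (f ∘ μ)) *ᵥ (U *ᵥ Pi.single kk 1)) =
        f (μ kk) := by
      rw [he, Aux2.col_quad hUo]
      have : ¬ ((kk : ℕ) < k) := by simp [hkk]
      simp [this]
    rw [h2] at h1
    exact le_trans (le_abs_self _) h1
  -- Final chain
  calc opNorm (U * Matrix.diagonal (f ∘ μ) * Uᵀ - trunc r W (f ∘ β))
      = opNorm (FA - FBr) := by rw [hFA, htr, hFBr]
    _ ≤ f σ := hopT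
    _ ≤ (1 + ε) * f (μ kk) := hscale
    _ ≤ (1 + ε) * opNorm (U * Matrix.diagonal (f ∘ μ) * Uᵀ - trunc k U (f ∘ μ)) := by
        rw [← hFA]
        exact mul_le_mul_of_nonneg_left hrhs hεnn
end

section
/- Let B be an n×n real SPSD matrix of rank r, and let f : [0,∞) → [0,∞) be nondecreasing. Set g(x) := f(x) − f(0) and let P_B denote the orthogonal projection onto the column space of B. Then the matrix g(B) + f(0)·P_B has rank at most r, it equals a best rank-r approximation f(B)_(r) of f(B) obtained by truncating the spectral decomposition of f(B) to its r largest eigenvalues, and ‖f(B) − (g(B) + f(0)·P_B)‖₂ = f(0), which is the (r+1)-st largest eigenvalue of f(B). -/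
open Matrix BigOperators

section Aux

variable {n : ℕ} {V : Matrix (Fin n) (Fin n) ℝ}

lemma sand_mul (hV : Vᵀ * V = 1) (a b : Fin n → ℝ) :
    (V * Matrix.diagonal a * Vᵀ) * (V * Matrix.diagonal b * Vᵀ)
      = V * Matrix.diagonal (fun i => a i * b i) * Vᵀ := by
  have : (V * Matrix.diagonal a * Vᵀ) * (V * Matrix.diagonal b * Vᵀ)
      = V * (Matrix.diagonal a * (Vᵀ * V) * Matrix.diagonal b) * Vᵀ := by
    simp only [Matrix.mul_assoc]
  rw [this, hV, Matrix.mul_one, Matrix.diagonal_mul_diagonal]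

lemma sand_transpose (a : Fin n → ℝ) :
    (V * Matrix.diagonal a * Vᵀ)ᵀ = V * Matrix.diagonal a * Vᵀ := by
  simp [Matrix.transpose_mul, Matrix.mul_assoc]

lemma sand_add (a b : Fin n → ℝ) :
    V * Matrix.diagonal a * Vᵀ + V * Matrix.diagonal b * Vᵀ
      = V * Matrix.diagonal (fun i => a i + b i) * Vᵀ := by
  rw [← Matrix.add_mul, ← Matrix.mul_add, ← Matrix.diagonal_add]

lemma sand_smul (c : ℝ) (a : Fin n → ℝ) :
    c • (V * Matrix.diagonal a * Vᵀ) = V * Matrix.diagonal (fun i => c * a i) * Vᵀ := by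
  have : Matrix.diagonal (fun i => c * a i) = c • Matrix.diagonal a := by
    rw [← Matrix.diagonal_smul]; rfl
  rw [this, Matrix.mul_smul, Matrix.smul_mul]

lemma sand_sub (a b : Fin n → ℝ) :
    V * Matrix.diagonal a * Vᵀ - V * Matrix.diagonal b * Vᵀ
      = V * Matrix.diagonal (fun i => a i - b i) * Vᵀ := by
  rw [← Matrix.sub_mul, ← Matrix.mul_sub, ← Matrix.diagonal_sub]

lemma sand_trace (hV : Vᵀ * V = 1) (a : Fin n → ℝ) :
    (V * Matrix.diagonal a * Vᵀ).trace = ∑ i, a i := by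
  rw [Matrix.trace_mul_comm, ← Matrix.mul_assoc, hV, Matrix.one_mul, Matrix.trace_diagonal]

lemma sand_cancel (hV : Vᵀ * V = 1) (a : Fin n → ℝ) :
    Vᵀ * (V * Matrix.diagonal a * Vᵀ) * V = Matrix.diagonal a := by
  have : Vᵀ * (V * Matrix.diagonal a * Vᵀ) * V
      = (Vᵀ * V) * Matrix.diagonal a * (Vᵀ * V) := by
    simp only [Matrix.mul_assoc]
  rw [this, hV, Matrix.one_mul, Matrix.mul_one]

lemma eig_mem {A : Matrix (Fin n) (Fin n) ℝ} (hA : A.IsHermitian) (c : ℝ)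
    (hAA : A * A = c • A) (i : Fin n) :
    hA.eigenvalues i = 0 ∨ hA.eigenvalues i = c := by
  set v := (WithLp.equiv 2 _) (hA.eigenvectorBasis i) with hv
  have hvne : v ≠ 0 := by
    intro h
    have : hA.eigenvectorBasis i = 0 := by
      apply (WithLp.equiv 2 _).injective
      rw [← hv, h]
      exact (WithLp.ofLp_zero (p := 2)).symm
    exact hA.eigenvectorBasis.orthonormal.ne_zero i this
  have hmv : A *ᵥ v = hA.eigenvalues i • v := hA.mulVec_eigenvectorBasis i
  set μ := hA.eigenvalues i
  have h1 : A *ᵥ (A *ᵥ v) = (μ * μ) • v := by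
    rw [hmv, Matrix.mulVec_smul, hmv, smul_smul]
  have h2 : A *ᵥ (A *ᵥ v) = (c * μ) • v := by
    rw [Matrix.mulVec_mulVec, hAA, Matrix.smul_mulVec, hmv, smul_smul]
  have h3 : (μ * μ - c * μ) • v = 0 := by
    rw [sub_smul, ← h1, ← h2, sub_self]
  rcases smul_eq_zero.mp h3 with h | h
  · have : μ * (μ - c) = 0 := by ring_nf; ring_nf at h; linarith
    rcases mul_eq_zero.mp this with h' | h'
    · exact Or.inl h'
    · exact Or.inr (by linarith [sub_eq_zero.mp h'])
  · exact absurd h hvne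

lemma eq_zero_of_eigs_zero {A : Matrix (Fin n) (Fin n) ℝ} (hA : A.IsHermitian)
    (h : ∀ i, hA.eigenvalues i = 0) : A = 0 := by
  have hs := hA.spectral_theorem
  have hd : (RCLike.ofReal ∘ hA.eigenvalues : Fin n → ℝ) = fun _ => 0 := by
    funext i; simp [h i]
  rw [hd] at hs
  simpa using hs

end Aux


/-- For an SPSD matrix `B` of rank `r < n` and a nondecreasing
`f : [0,∞) → [0,∞)`, with `g(x) = f(x) − f(0)` and `P_B` the orthogonal projection onto the
column space of `B`, the matrix `g(B) + f(0)·P_B` has rank at most `r`, equals the best rank-`r`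
approximation of `f(B)` obtained by truncating the spectral decomposition of `f(B)` to its `r`
largest eigenvalues, and `‖f(B) − (g(B) + f(0)·P_B)‖₂ = f(0)`, which is the `(r+1)`-st largest
eigenvalue of `f(B)`. -/
theorem funNystrom_best_rank_r
    (n : ℕ) (B V : Matrix (Fin n) (Fin n) ℝ) (β : Fin n → ℝ)
    (hB : B.PosSemidef) (hdec : IsSpectralDecomp B V β)
    (r : ℕ) (hr : r = B.rank) (hrn : r < n)
    (f : ℝ → ℝ) (hfmono : MonotoneOn f (Set.Ici 0)) (hfnn : ∀ x : ℝ, 0 ≤ x → 0 ≤ f x)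
    (g : ℝ → ℝ) (hg : g = fun x => f x - f 0)
    (P : Matrix (Fin n) (Fin n) ℝ) (hP : IsOrthProjOnto P B) :
    (V * Matrix.diagonal (g ∘ β) * Vᵀ + f 0 • P).rank ≤ r ∧
    V * Matrix.diagonal (g ∘ β) * Vᵀ + f 0 • P = trunc r V (f ∘ β) ∧
    opNorm (V * Matrix.diagonal (f ∘ β) * Vᵀ -
      (V * Matrix.diagonal (g ∘ β) * Vᵀ + f 0 • P)) = f 0 ∧
    f 0 = f (β ⟨r, hrn⟩) := by
  obtain ⟨hV, hanti, hBeq⟩ := hdec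
  have hβdiag : Matrix.diagonal β = Vᵀ * B * V := by
    rw [hBeq, sand_cancel hV]
  have hβnn : ∀ i, 0 ≤ β i := by
    have h1 : (Vᵀ * B * V).PosSemidef := by
      have := hB.mul_mul_conjTranspose_same Vᵀ
      rwa [Matrix.conjTranspose_eq_transpose_of_trivial, Matrix.transpose_transpose] at this
    rw [← hβdiag] at h1
    exact Matrix.posSemidef_diagonal_iff.mp h1
  have hrankdiag : B.rank = (Matrix.diagonal β).rank := by
    apply le_antisymm
    · rw [hBeq]
      exact le_trans (Matrix.rank_mul_le_left _ _) (Matrix.rank_mul_le_right _ _)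
    · rw [hβdiag]
      exact le_trans (Matrix.rank_mul_le_left _ _) (Matrix.rank_mul_le_right _ _)
  have scard : (Finset.filter (fun j : Fin n => β j ≠ 0) Finset.univ).card = r := by
    rw [hr, hrankdiag, Matrix.rank_diagonal, Fintype.card_subtype]
  have hchar : ∀ i : Fin n, β i ≠ 0 ↔ (i : ℕ) < r := by
    intro i
    constructor
    · intro hne
      have hpos : 0 < β i := lt_of_le_of_ne (hβnn i) (Ne.symm hne)
      have hsub : Finset.Iic i ⊆ Finset.filter (fun j : Fin n => β j ≠ 0) Finset.univ := by
        intro j hj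
        simp only [Finset.mem_Iic] at hj
        simp only [Finset.mem_filter, Finset.mem_univ, true_and]
        exact ne_of_gt (lt_of_lt_of_le hpos (hanti hj))
      have := Finset.card_le_card hsub
      rw [Fin.card_Iic, scard] at this
      omega
    · intro hlt
      by_contra h0
      have hsub : Finset.filter (fun j : Fin n => β j ≠ 0) Finset.univ ⊆ Finset.Iio i := by
        intro j hj
        simp only [Finset.mem_filter, Finset.mem_univ, true_and] at hj
        simp only [Finset.mem_Iio]
        by_contra hji
        push_neg at hji
        exact hj (le_antisymm (le_trans (hanti hji) (le_of_eq h0)) (hβnn j))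
      have := Finset.card_le_card hsub
      rw [Fin.card_Iio, scard] at this
      omega
  have hβ0 : ∀ i : Fin n, ¬((i : ℕ) < r) → β i = 0 := by
    intro i h
    by_contra hne
    exact h ((hchar i).mp hne)
  have hβr : β ⟨r, hrn⟩ = 0 := hβ0 _ (by simp)
  set e : Fin n → ℝ := fun i => if (i : ℕ) < r then 1 else 0 with he
  set Q : Matrix (Fin n) (Fin n) ℝ := V * Matrix.diagonal e * Vᵀ with hQ
  have hQB : Q * B = B := by
    rw [hQ, hBeq, sand_mul hV]
    have hd : (fun i => e i * β i) = β := by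
      funext i
      by_cases h : (i : ℕ) < r
      · simp [he, h]
      · simp [he, h, hβ0 i h]
    rw [hd]
  have hQBY : ∃ Y, Q = B * Y := by
    refine ⟨V * Matrix.diagonal (fun i : Fin n => if (i : ℕ) < r then (β i)⁻¹ else 0) * Vᵀ, ?_⟩
    rw [hQ, hBeq, sand_mul hV]
    congr 1
    congr 1
    refine congrArg Matrix.diagonal (funext fun i => ?_)
    by_cases h : (i : ℕ) < r
    · simp only [he, if_pos h]
      exact (mul_inv_cancel₀ ((hchar i).mpr h)).symm
    · simp only [he, if_neg h, mul_zero]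
  obtain ⟨hPt, hPP, hPB, Yp, hPYp⟩ := hP
  have hPQ : P = Q := by
    have h1 : Q * P = P := by rw [hPYp, ← Matrix.mul_assoc, hQB]
    obtain ⟨Y, hY⟩ := hQBY
    have h2 : P * Q = Q := by rw [hY, ← Matrix.mul_assoc, hPB]
    have hQt : Qᵀ = Q := sand_transpose e
    calc P = Pᵀ := hPt.symm
    _ = (Q * P)ᵀ := by rw [h1]
    _ = Pᵀ * Qᵀ := by rw [Matrix.transpose_mul]
    _ = P * Q := by rw [hPt, hQt]
    _ = Q := h2
  have hsum : V * Matrix.diagonal (g ∘ β) * Vᵀ + f 0 • P = trunc r V (f ∘ β) := by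
    rw [hPQ, hQ, sand_smul, sand_add]
    unfold trunc
    congr 1
    congr 1
    refine congrArg Matrix.diagonal (funext fun i => ?_)
    by_cases h : (i : ℕ) < r
    · simp only [he, he, hg, Function.comp_apply, if_pos h]
      ring
    · simp only [he, hg, Function.comp_apply, if_neg h, hβ0 i h]
      ring
  have hrank : (V * Matrix.diagonal (g ∘ β) * Vᵀ + f 0 • P).rank ≤ r := by
    rw [hsum]
    unfold trunc
    refine le_trans (le_trans (Matrix.rank_mul_le_left _ _) (Matrix.rank_mul_le_right _ _)) ?_
    rw [Matrix.rank_diagonal]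
    refine le_trans (Fintype.card_subtype_mono _ (fun i : Fin n => (i : ℕ) < r) ?_) ?_
    · intro i hi
      by_contra h
      exact hi (if_neg h)
    · rw [Fintype.card_subtype]
      have hfe : Finset.filter (fun i : Fin n => (i : ℕ) < r) Finset.univ
          = Finset.Iio (⟨r, hrn⟩ : Fin n) := by
        ext j
        simp [Fin.lt_def]
      rw [hfe, Fin.card_Iio]
  have hf0 : 0 ≤ f 0 := hfnn 0 le_rfl
  set e' : Fin n → ℝ := fun i => if (i : ℕ) < r then 0 else 1 with he'
  set M : Matrix (Fin n) (Fin n) ℝ := V * Matrix.diagonal (f ∘ β) * Vᵀ -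
      (V * Matrix.diagonal (g ∘ β) * Vᵀ + f 0 • P) with hM
  have hMeq : M = V * Matrix.diagonal (fun i => f 0 * e' i) * Vᵀ := by
    rw [hM, hPQ, hQ, sand_smul, sand_add, sand_sub]
    congr 1
    congr 1
    refine congrArg Matrix.diagonal (funext fun i => ?_)
    by_cases h : (i : ℕ) < r
    · simp only [he, he', hg, Function.comp_apply, if_pos h]
      ring
    · simp only [he, he', hg, Function.comp_apply, if_neg h, hβ0 i h]
      ring
  have hMH : Mᴴ = M := by
    rw [Matrix.conjTranspose_eq_transpose_of_trivial, hMeq, sand_transpose]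
  have hAval : Mᴴ * M = V * Matrix.diagonal (fun i => (f 0) ^ 2 * e' i) * Vᵀ := by
    rw [hMH, hMeq, sand_mul hV]
    congr 1
    congr 1
    refine congrArg Matrix.diagonal (funext fun i => ?_)
    by_cases h : (i : ℕ) < r
    · simp only [he, he', Function.comp_apply, if_pos h]
      ring
    · simp only [he, he', Function.comp_apply, if_neg h]
      ring
  have hAA : (Mᴴ * M) * (Mᴴ * M) = ((f 0) ^ 2) • (Mᴴ * M) := by
    rw [hAval, sand_mul hV, sand_smul]
    congr 1
    congr 1
    refine congrArg Matrix.diagonal (funext fun i => ?_)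
    by_cases h : (i : ℕ) < r
    · simp only [he, he', Function.comp_apply, if_pos h]
      ring
    · simp only [he, he', Function.comp_apply, if_neg h]
      ring
  have hkey : ∀ j, (Matrix.isHermitian_conjTranspose_mul_self M).eigenvalues j = 0 ∨
      (Matrix.isHermitian_conjTranspose_mul_self M).eigenvalues j = (f 0) ^ 2 :=
    eig_mem _ _ hAA
  have hsv : ∀ i, svDesc M i = 0 ∨ svDesc M i = f 0 := by
    intro i
    unfold svDesc eigsDesc
    rcases hkey ((Tuple.sort (Matrix.isHermitian_conjTranspose_mul_self M).eigenvalues) i.rev)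
      with h | h
    · left
      simp only [Function.comp_apply]
      rw [h, Real.sqrt_zero]
    · right
      simp only [Function.comp_apply]
      rw [h, Real.sqrt_sq hf0]
  have hub : ∀ i, svDesc M i ≤ f 0 := by
    intro i
    rcases hsv i with h | h
    · rw [h]; exact hf0
    · rw [h]
  haveI hne : Nonempty (Fin n) := ⟨⟨0, lt_of_le_of_lt (Nat.zero_le r) hrn⟩⟩
  have hge : f 0 ≤ ⨆ i, svDesc M i := by
    rcases eq_or_lt_of_le hf0 with h0 | h0
    · have i0 := Classical.arbitrary (Fin n)
      refine le_trans ?_ (le_ciSup (Set.Finite.bddAbove (Set.finite_range _)) i0)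
      rcases hsv i0 with h | h
      · rw [h, ← h0]
      · rw [h]
    · have hex : ∃ j, (Matrix.isHermitian_conjTranspose_mul_self M).eigenvalues j = (f 0) ^ 2 := by
        by_contra hc
        push_neg at hc
        have hall : ∀ j, (Matrix.isHermitian_conjTranspose_mul_self M).eigenvalues j = 0 :=
          fun j => (hkey j).resolve_right (hc j)
        have hz := eq_zero_of_eigs_zero _ hall
        have ht : (Mᴴ * M).trace = (f 0) ^ 2 * ∑ i, e' i := by
          rw [hAval, sand_trace hV, Finset.mul_sum]
        rw [hz] at ht
        simp only [Matrix.trace_zero] at ht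
        have h1 : (1 : ℝ) ≤ ∑ i, e' i := by
          have hle := Finset.single_le_sum (f := e')
            (fun i _ => by by_cases h : (i : ℕ) < r <;> simp [he', h])
            (Finset.mem_univ (⟨r, hrn⟩ : Fin n))
          simpa [he'] using hle
        nlinarith
      obtain ⟨j, hj⟩ := hex
      refine le_trans ?_ (le_ciSup (Set.Finite.bddAbove (Set.finite_range _))
        (((Tuple.sort (Matrix.isHermitian_conjTranspose_mul_self M).eigenvalues)⁻¹ j).rev))
      unfold svDesc eigsDesc
      simp only [Function.comp_apply, Fin.rev_rev, Equiv.Perm.inv_def, Equiv.apply_symm_apply]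
      rw [hj, Real.sqrt_sq hf0]
  refine ⟨hrank, hsum, ?_, ?_⟩
  · show opNorm M = f 0
    unfold opNorm
    exact le_antisymm (ciSup_le hub) hge
  · rw [hβr]
end
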